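/- arXiv:1804.03442 — 4 statements merged into one kernel-verified Lean document; each statement's English description precedes it below -/
import Mathlib

section
/- Almost surely, the sample path t ↦ γ_t of the standard gamma process is strictly increasing on [0,∞): P-a.s., for all 0 ≤ s < t one has γ_s < γ_t. -/
open MeasureTheory ProbabilityTheory Real Set Filter

noncomputable section

/-- A standard gamma process on a probability space: starts at `0` a.s., has independent
increments, the increment over `[s, t]` is gamma-distributed with shape `t - s` and rate `1`,
and almost every sample path is right-continuous with left limits. -/
structure IsStdGammaProcess {Ω : Type*} [MeasurableSpace Ω] (P : Measure Ω)
    (γ : ℝ → Ω → ℝ) : Prop where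
  measurable : ∀ t : ℝ, Measurable (γ t)
  zero : ∀ᵐ ω ∂P, γ 0 ω = 0
  indep_incr : ∀ (n : ℕ) (t : Fin (n + 1) → ℝ), Monotone t → (∀ i, 0 ≤ t i) →
    iIndepFun
      (fun i : Fin n => fun ω => γ (t i.succ) ω - γ (t i.castSucc) ω) P
  incr_law : ∀ s t : ℝ, 0 ≤ s → s < t →
    P.map (fun ω => γ t ω - γ s ω) = gammaMeasure (t - s) 1
  cadlag : ∀ᵐ ω ∂P,
    (∀ t : ℝ, 0 ≤ t → ContinuousWithinAt (fun s => γ s ω) (Set.Ici t) t) ∧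
    (∀ t : ℝ, 0 < t → ∃ l : ℝ, Tendsto (fun s => γ s ω) (nhdsWithin t (Set.Iio t)) (nhds l))


lemma gammaMeasure_Iic_zero (a r : ℝ) : gammaMeasure a r (Iic 0) = 0 := by
  rw [gammaMeasure, withDensity_apply _ measurableSet_Iic]
  have h0 : (volume.restrict (Iic (0:ℝ))) {x | ¬ x < 0} = 0 := by
    rw [Measure.restrict_apply₀]
    · have h1 : {x : ℝ | 0 ≤ x} ∩ Iic 0 = {0} := by
        ext x; simp [le_antisymm_iff, and_comm]
      simp only [not_lt]
      simp [h1]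
    · exact (measurableSet_Iio.compl).nullMeasurableSet
  have hae : ∀ᵐ x ∂(volume.restrict (Iic (0:ℝ))), x < 0 := ae_iff.mpr h0
  have : ∀ᵐ x ∂(volume.restrict (Iic (0:ℝ))), gammaPDF a r x = 0 := by
    filter_upwards [hae] with x hx
    exact gammaPDF_of_neg hx
  rw [lintegral_congr_ae this, lintegral_zero]

-- sequence of rationals decreasing to s within (s, b)
lemma exists_rat_seq (s b : ℝ) (hsb : s < b) :
    ∃ q : ℕ → ℚ, (∀ n, s < (q n : ℝ) ∧ (q n : ℝ) < b) ∧
      Tendsto (fun n => (q n : ℝ)) atTop (nhds s) := by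
  have h : ∀ n : ℕ, ∃ q : ℚ, s < (q : ℝ) ∧ (q : ℝ) < min b (s + 1 / (n + 1)) := by
    intro n
    exact exists_rat_btwn (lt_min hsb (lt_add_of_pos_right s (by positivity)))
  choose q hq1 hq2 using h
  refine ⟨q, fun n => ⟨hq1 n, lt_of_lt_of_le (hq2 n) (min_le_left _ _)⟩, ?_⟩
  have hcnst : Tendsto (fun _ : ℕ => s) atTop (nhds s) := tendsto_const_nhds
  have hupper : Tendsto (fun n : ℕ => s + 1 / (n + 1 : ℝ)) atTop (nhds s) := by
    have : Tendsto (fun n : ℕ => 1 / ((n : ℝ) + 1)) atTop (nhds 0) :=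
      tendsto_one_div_add_atTop_nhds_zero_nat
    simpa using hcnst.add this
  exact tendsto_of_tendsto_of_tendsto_of_le_of_le hcnst hupper
    (fun n => (hq1 n).le)
    (fun n => (le_min_iff.mp (hq2 n).le).2)

theorem gamma_process_strictMono'
    {Ω : Type*} [MeasurableSpace Ω] (P : Measure Ω) [IsProbabilityMeasure P]
    (γ : ℝ → Ω → ℝ)
    (hmeas : ∀ t : ℝ, Measurable (γ t))
    (hlaw : ∀ s t : ℝ, 0 ≤ s → s < t →
      P.map (fun ω => γ t ω - γ s ω) = gammaMeasure (t - s) 1)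
    (hcad : ∀ᵐ ω ∂P,
      (∀ t : ℝ, 0 ≤ t → ContinuousWithinAt (fun s => γ s ω) (Set.Ici t) t)) :
    ∀ᵐ ω ∂P, ∀ s t : ℝ, 0 ≤ s → s < t → γ s ω < γ t ω := by
  -- step A: rational monotonicity a.s.
  have hA : ∀ᵐ ω ∂P, ∀ q r : ℚ, 0 ≤ q → q < r → γ (q : ℝ) ω < γ (r : ℝ) ω := by
    rw [ae_all_iff]; intro q
    rw [ae_all_iff]; intro r
    by_cases h : 0 ≤ q ∧ q < r
    · obtain ⟨hq, hqr⟩ := h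
      have hq' : (0:ℝ) ≤ (q:ℝ) := by exact_mod_cast hq
      have hqr' : (q:ℝ) < (r:ℝ) := by exact_mod_cast hqr
      have hmap := hlaw (q:ℝ) (r:ℝ) hq' hqr'
      have hsub : Measurable (fun ω => γ (r:ℝ) ω - γ (q:ℝ) ω) :=
        (hmeas _).sub (hmeas _)
      have hz : P {ω | γ (r:ℝ) ω - γ (q:ℝ) ω ≤ 0} = 0 := by
        have h2 : P.map (fun ω => γ (r:ℝ) ω - γ (q:ℝ) ω) (Iic 0) = 0 := by
          rw [hmap]; exact gammaMeasure_Iic_zero _ 1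
        rwa [Measure.map_apply hsub measurableSet_Iic] at h2
      have : ∀ᵐ ω ∂P, ¬ (γ (r:ℝ) ω - γ (q:ℝ) ω ≤ 0) := by
        rw [ae_iff]; simpa using hz
      filter_upwards [this] with ω hω _ _
      linarith [not_le.mp hω]
    · push_neg at h
      filter_upwards with ω h1 h2
      exact absurd (h h1) (not_le.mpr h2)
  filter_upwards [hA, hcad] with ω hmono hrc s t hs hst
  obtain ⟨q1, hsq1, hq1t⟩ := exists_rat_btwn hst
  obtain ⟨q2, hq12, hq2t⟩ := exists_rat_btwn hq1t
  have hq1nn : (0:ℚ) ≤ q1 := by exact_mod_cast hs.trans hsq1.le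
  have hq2nn : (0:ℚ) ≤ q2 := hq1nn.trans (by exact_mod_cast hq12.le)
  -- f s ≤ f q1
  have h1 : γ s ω ≤ γ (q1:ℝ) ω := by
    obtain ⟨q, hq, hqtend⟩ := exists_rat_seq s (q1:ℝ) hsq1
    have hseq : Tendsto (fun n => γ ((q n : ℝ)) ω) atTop (nhds (γ s ω)) := by
      apply (hrc s hs).tendsto.comp
      rw [tendsto_nhdsWithin_iff]
      exact ⟨hqtend, Filter.Eventually.of_forall fun n => (hq n).1.le⟩
    refine le_of_tendsto hseq (Filter.Eventually.of_forall fun n => ?_)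
    have h0 : (0:ℚ) ≤ q n := by exact_mod_cast hs.trans (hq n).1.le
    have hlt : q n < q1 := by exact_mod_cast (hq n).2
    exact (hmono (q n) q1 h0 hlt).le
  -- f q2 ≤ f t
  have h2 : γ (q2:ℝ) ω ≤ γ t ω := by
    obtain ⟨q, hq, hqtend⟩ := exists_rat_seq t (t+1) (by linarith)
    have ht0 : (0:ℝ) ≤ t := hs.trans hst.le
    have hseq : Tendsto (fun n => γ ((q n : ℝ)) ω) atTop (nhds (γ t ω)) := by
      apply (hrc t ht0).tendsto.comp
      rw [tendsto_nhdsWithin_iff]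
      exact ⟨hqtend, Filter.Eventually.of_forall fun n => (hq n).1.le⟩
    refine ge_of_tendsto hseq (Filter.Eventually.of_forall fun n => ?_)
    have hlt : q2 < q n := by exact_mod_cast hq2t.trans (hq n).1
    exact (hmono q2 (q n) hq2nn hlt).le
  calc γ s ω ≤ γ (q1:ℝ) ω := h1
    _ < γ (q2:ℝ) ω := hmono q1 q2 hq1nn (by exact_mod_cast hq12)
    _ ≤ γ t ω := h2

/-- Almost surely, the sample path `t ↦ γ_t` of a standard gamma process is
strictly increasing on `[0, ∞)`. -/
theorem gamma_process_strictMono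
    {Ω : Type*} [MeasurableSpace Ω] (P : Measure Ω) [IsProbabilityMeasure P]
    (γ : ℝ → Ω → ℝ) (hγ : IsStdGammaProcess P γ) :
    ∀ᵐ ω ∂P, ∀ s t : ℝ, 0 ≤ s → s < t → γ s ω < γ t ω := by
  exact gamma_process_strictMono' P γ hγ.measurable hγ.incr_law
    (hγ.cadlag.mono fun ω h => h.1)
end
end

section
/- For any r > 0 and any partition 0 = t_0 < t_1 < ⋯ < t_n = r, the random vector of increments (ζ^r_{t_1} − ζ^r_{t_0}, ζ^r_{t_2} − ζ^r_{t_1}, …, ζ^r_{t_n} − ζ^r_{t_{n−1}}) is independent of the random variable γ_r. -/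
open MeasureTheory ProbabilityTheory Real Set Filter

noncomputable section

open scoped ENNReal NNReal

namespace GammaBridgeProofAux

/-- indicator with value 1 in ℝ≥0∞ -/
def ind (A : Set ℝ) (v : ℝ) : ℝ≥0∞ := A.indicator 1 v

lemma ind_measurable {A : Set ℝ} (hA : MeasurableSet A) : Measurable (ind A) :=
  measurable_one.indicator hA

lemma ind_mul_ind_eq_indicator {A : Set ℝ} (f : ℝ → ℝ≥0∞) (v : ℝ) :
    f v * ind A v = A.indicator f v := by
  by_cases h : v ∈ A <;> simp [ind, h]

/-- the (normalized) beta kernel -/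
def betaKer (a b : ℝ) : ℝ → ℝ≥0∞ := fun u =>
  (Ioo (0:ℝ) 1).indicator
    (fun u => ENNReal.ofReal (Gamma (a+b) / (Gamma a * Gamma b) * (u ^ (a-1) * (1-u) ^ (b-1)))) u

lemma betaKer_measurable (a b : ℝ) : Measurable (betaKer a b) := by
  apply Measurable.indicator _ measurableSet_Ioo
  apply Measurable.ennreal_ofReal
  exact (measurable_const.mul ((measurable_id'.pow_const _).mul
    ((measurable_const.sub measurable_id').pow_const _)))

lemma L1 {a b s x : ℝ} (hs : s < 0) : gammaPDF a 1 x * gammaPDF b 1 (s - x) = 0 := by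
  rcases lt_or_ge x 0 with hx | hx
  · rw [gammaPDF_of_neg hx, zero_mul]
  · rw [show gammaPDF b 1 (s - x) = 0 from gammaPDF_of_neg (by linarith), mul_zero]

lemma L2 {a b : ℝ} (ha : 0 < a) (hb : 0 < b) {s u : ℝ} (hs : 0 < s) (hu0 : u ≠ 0)
    (hu1 : u ≠ 1) :
    ENNReal.ofReal s * (gammaPDF a 1 (s*u) * gammaPDF b 1 (s - s*u))
      = gammaPDF (a+b) 1 s * betaKer a b u := by
  rcases lt_trichotomy u 0 with hu | hu | hu
  · rw [gammaPDF_of_neg (by nlinarith), zero_mul, mul_zero]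
    rw [betaKer, indicator_of_notMem (by simp [mem_Ioo]; intro h; linarith), mul_zero]
  · exact absurd hu hu0
  rcases lt_trichotomy u 1 with hu' | hu' | hu'
  · -- main case 0 < u < 1
    have h1 : (0:ℝ) ≤ s * u := by positivity
    have h2 : (0:ℝ) ≤ s - s * u := by nlinarith
    have h3 : (0:ℝ) ≤ s := hs.le
    rw [gammaPDF_of_nonneg h1, gammaPDF_of_nonneg h2, gammaPDF_of_nonneg h3,
      betaKer, indicator_of_mem (by exact ⟨hu, hu'⟩)]
    rw [← ENNReal.ofReal_mul (by positivity), ← ENNReal.ofReal_mul (by positivity),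
      ← ENNReal.ofReal_mul (by positivity)]
    congr 1
    have hΓa := Gamma_pos_of_pos ha
    have hΓb := Gamma_pos_of_pos hb
    have hΓab := Gamma_pos_of_pos (by linarith : 0 < a + b)
    have e1 : (s * u) ^ (a-1) = s ^ (a-1) * u ^ (a-1) := mul_rpow h3 hu.le
    have e2 : s - s * u = s * (1 - u) := by ring
    have e3 : (s * (1-u)) ^ (b-1) = s ^ (b-1) * (1-u) ^ (b-1) :=
      mul_rpow h3 (by linarith)
    have hΓa' : Gamma a ≠ 0 := hΓa.ne'
    have hΓb' : Gamma b ≠ 0 := hΓb.ne'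
    have hΓab' : Gamma (a+b) ≠ 0 := hΓab.ne'
    have e4 : s ^ (a-1) * s ^ (b-1) * s = s ^ (a+b-1) := by
      rw [← rpow_add hs, ← rpow_add_one hs.ne']; ring_nf
    have e5 : exp (-(1 * (s*u))) * exp (-(1 * (s * (1-u)))) = exp (-(1 * s)) := by
      rw [← exp_add]; ring_nf
    rw [one_rpow, one_rpow, one_rpow, e2, e1, e3]
    conv_rhs => rw [← e4, ← e5]
    field_simp
  · exact absurd hu' hu1
  · rw [show gammaPDF b 1 (s - s*u) = 0 from gammaPDF_of_neg (by nlinarith), mul_zero, mul_zero]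
    rw [betaKer, indicator_of_notMem (by simp [mem_Ioo]; intro h; linarith), mul_zero]



lemma lintegral_scale {f : ℝ → ℝ≥0∞} (hf : Measurable f) {c : ℝ} (hc : 0 < c) :
    ∫⁻ x, f x = ENNReal.ofReal c * ∫⁻ u, f (c * u) := by
  have h1 : ∫⁻ u, f (c * u) = ∫⁻ x, f x ∂(Measure.map (fun x => c * x) volume) :=
    (lintegral_map hf (measurable_const_mul c)).symm
  rw [h1, Real.map_volume_mul_left hc.ne', lintegral_smul_measure, smul_eq_mul, ← mul_assoc,
    ← ENNReal.ofReal_mul hc.le, abs_of_pos (by positivity), mul_inv_cancel₀ hc.ne',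
    ENNReal.ofReal_one, one_mul]

lemma ae_ne_vol (c : ℝ) : ∀ᵐ x : ℝ ∂volume, x ≠ c := by
  have : volume ({c} : Set ℝ) = 0 := Real.volume_singleton
  filter_upwards [measure_eq_zero_iff_ae_notMem.mp this] with x hx
  simpa using hx

lemma measurable_gammaPDF' (a r : ℝ) : Measurable (gammaPDF a r) :=
  (measurable_gammaPDFReal a r).ennreal_ofReal

lemma prod_gamma_rect {a b : ℝ} (ha : 0 < a) (hb : 0 < b) {A B : Set ℝ}
    (hA : MeasurableSet A) (hB : MeasurableSet B) :
    ((gammaMeasure a 1).prod (gammaMeasure b 1))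
        ((fun p : ℝ × ℝ => (p.1 / (p.1 + p.2), p.1 + p.2)) ⁻¹' (A ×ˢ B))
      = (volume.withDensity (betaKer a b)) A * gammaMeasure (a+b) 1 B := by
  haveI := isProbabilityMeasure_gammaMeasure ha one_pos
  haveI := isProbabilityMeasure_gammaMeasure hb one_pos
  haveI := isProbabilityMeasure_gammaMeasure (add_pos ha hb) one_pos
  have hfa := measurable_gammaPDF' a 1
  have hfb := measurable_gammaPDF' b 1
  have hfab := measurable_gammaPDF' (a+b) 1
  have hiA := ind_measurable hA
  have hiB := ind_measurable hB
  have hm2 : Measurable (fun p : ℝ × ℝ => (p.1 / (p.1 + p.2), p.1 + p.2)) :=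
    (measurable_fst.div (measurable_fst.add measurable_snd)).prodMk
      (measurable_fst.add measurable_snd)
  have hS : MeasurableSet ((fun p : ℝ × ℝ => (p.1 / (p.1 + p.2), p.1 + p.2)) ⁻¹' (A ×ˢ B)) :=
    hm2 (hA.prod hB)
  -- the master integrand after the shear substitution
  set F : ℝ × ℝ → ℝ≥0∞ :=
    fun q => gammaPDF b 1 (q.2 - q.1) * (ind A (q.1 / q.2) * ind B q.2) with hF_def
  have hFm : Measurable F :=
    ((hfb.comp (measurable_snd.sub measurable_fst)).mul
      ((hiA.comp (measurable_fst.div measurable_snd)).mul (hiB.comp measurable_snd)))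
  have step1 : ((gammaMeasure a 1).prod (gammaMeasure b 1))
        ((fun p : ℝ × ℝ => (p.1 / (p.1 + p.2), p.1 + p.2)) ⁻¹' (A ×ˢ B))
      = ∫⁻ x, gammaPDF a 1 x * ∫⁻ y, gammaPDF b 1 y *
          (ind A (x / (x + y)) * ind B (x + y)) ∂volume ∂volume := by
    rw [← lintegral_indicator_one hS]
    have hind : ∀ p : ℝ × ℝ,
        ((fun p : ℝ × ℝ => (p.1 / (p.1 + p.2), p.1 + p.2)) ⁻¹' (A ×ˢ B)).indicator 1 p
          = ind A (p.1 / (p.1 + p.2)) * ind B (p.1 + p.2) := by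
      intro p
      by_cases h1 : p.1 / (p.1 + p.2) ∈ A <;> by_cases h2 : p.1 + p.2 ∈ B <;>
        simp [ind, indicator, h1, h2, Set.mem_preimage, Set.mem_prod]
    simp_rw [hind]
    have hgm : Measurable (fun p : ℝ × ℝ => ind A (p.1 / (p.1 + p.2)) * ind B (p.1 + p.2)) :=
      (hiA.comp (measurable_fst.div (measurable_fst.add measurable_snd))).mul
        (hiB.comp (measurable_fst.add measurable_snd))
    rw [lintegral_prod _ hgm.aemeasurable]
    have inner1 : ∀ x : ℝ, (∫⁻ y, ind A (x / (x + y)) * ind B (x + y) ∂(gammaMeasure b 1))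
        = ∫⁻ y, gammaPDF b 1 y * (ind A (x / (x + y)) * ind B (x + y)) ∂volume := by
      intro x
      have hg : Measurable (fun y : ℝ => ind A (x / (x + y)) * ind B (x + y)) :=
        (hiA.comp (measurable_const.div (measurable_const.add measurable_id))).mul
          (hiB.comp (measurable_const.add measurable_id))
      rw [gammaMeasure, lintegral_withDensity_eq_lintegral_mul volume hfb hg]
      rfl
    simp only [inner1]
    have hI : Measurable (fun x : ℝ =>
        ∫⁻ y, gammaPDF b 1 y * (ind A (x / (x + y)) * ind B (x + y)) ∂volume) := by
      exact Measurable.lintegral_prod_right'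
        (f := fun q : ℝ × ℝ => gammaPDF b 1 q.2 * (ind A (q.1 / (q.1 + q.2)) * ind B (q.1 + q.2)))
        ((hfb.comp measurable_snd).mul
          ((hiA.comp (measurable_fst.div (measurable_fst.add measurable_snd))).mul
            (hiB.comp (measurable_fst.add measurable_snd))))
    rw [gammaMeasure, lintegral_withDensity_eq_lintegral_mul volume hfa hI]
    rfl
  have step2 : ∀ x : ℝ, ∫⁻ y, gammaPDF b 1 y * (ind A (x / (x + y)) * ind B (x + y)) ∂volume
      = ∫⁻ sv, F (x, sv) ∂volume := by
    intro x
    rw [← lintegral_add_left_eq_self (fun sv => F (x, sv)) x]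
    congr 1
    funext y
    simp only [hF_def, add_sub_cancel_left]
  have step3 : ∫⁻ x, gammaPDF a 1 x * ∫⁻ sv, F (x, sv) ∂volume ∂volume
      = ∫⁻ sv, ∫⁻ x, gammaPDF a 1 x * F (x, sv) ∂volume ∂volume := by
    have : ∀ x : ℝ, gammaPDF a 1 x * ∫⁻ sv, F (x, sv) ∂volume
        = ∫⁻ sv, gammaPDF a 1 x * F (x, sv) ∂volume := by
      intro x
      have hfx : Measurable (fun sv : ℝ => F (x, sv)) := hFm.comp measurable_prodMk_left
      rw [lintegral_const_mul _ hfx]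
    simp_rw [this]
    exact lintegral_lintegral_swap (((hfa.comp measurable_fst).mul hFm).aemeasurable)
  have betaInt_eq : ∫⁻ u, betaKer a b u * ind A u ∂volume
      = (volume.withDensity (betaKer a b)) A := by
    rw [withDensity_apply _ hA, ← lintegral_indicator hA]
    congr 1
    funext u
    exact ind_mul_ind_eq_indicator _ _
  have gammaInt_eq : ∫⁻ sv, gammaPDF (a+b) 1 sv * ind B sv ∂volume
      = gammaMeasure (a+b) 1 B := by
    rw [gammaMeasure, withDensity_apply _ hB, ← lintegral_indicator hB]
    congr 1
    funext sv
    exact ind_mul_ind_eq_indicator _ _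
  have key : ∀ᵐ sv : ℝ ∂volume, ∫⁻ x, gammaPDF a 1 x * F (x, sv) ∂volume
      = (∫⁻ u, betaKer a b u * ind A u ∂volume) * (gammaPDF (a+b) 1 sv * ind B sv) := by
    filter_upwards [ae_ne_vol 0] with sv hsv
    rcases hsv.lt_or_gt with hneg | hpos
    · have hz : ∀ x : ℝ, gammaPDF a 1 x * F (x, sv) = 0 := by
        intro x
        have h0 := L1 (a := a) (b := b) (x := x) hneg
        calc gammaPDF a 1 x * F (x, sv)
            = (gammaPDF a 1 x * gammaPDF b 1 (sv - x)) * (ind A (x / sv) * ind B sv) := by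
              simp only [hF_def]; ring
          _ = 0 := by rw [h0, zero_mul]
      simp only [hz, lintegral_zero]
      rw [gammaPDF_of_neg hneg]
      simp
    · have hxm : Measurable (fun x => gammaPDF a 1 x * F (x, sv)) :=
        (hfa.mul (hFm.comp (measurable_id.prodMk measurable_const)))
      have hxm2 : Measurable (fun u : ℝ => gammaPDF a 1 (sv * u) * F (sv * u, sv)) :=
        hxm.comp (measurable_const_mul sv)
      rw [lintegral_scale hxm hpos, ← lintegral_const_mul _ hxm2]
      have hae : ∀ᵐ u : ℝ ∂volume,
          ENNReal.ofReal sv * (gammaPDF a 1 (sv * u) * F (sv * u, sv))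
            = (betaKer a b u * ind A u) * (gammaPDF (a+b) 1 sv * ind B sv) := by
        filter_upwards [ae_ne_vol 0, ae_ne_vol 1] with u hu0 hu1
        have hdiv : sv * u / sv = u := mul_div_cancel_left₀ _ hpos.ne'
        have hkey := L2 ha hb hpos hu0 hu1
        calc ENNReal.ofReal sv * (gammaPDF a 1 (sv * u) * F (sv * u, sv))
            = (ENNReal.ofReal sv * (gammaPDF a 1 (sv * u) * gammaPDF b 1 (sv - sv * u)))
                * (ind A u * ind B sv) := by
              simp only [hF_def, hdiv]; ring
          _ = (gammaPDF (a+b) 1 sv * betaKer a b u) * (ind A u * ind B sv) := by rw [hkey]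
          _ = (betaKer a b u * ind A u) * (gammaPDF (a+b) 1 sv * ind B sv) := by ring
      rw [lintegral_congr_ae hae, lintegral_mul_const (f := fun u => betaKer a b u * ind A u) _ ((betaKer_measurable a b).mul hiA)]
  rw [step1]
  simp_rw [step2]
  rw [step3, lintegral_congr_ae key,
    lintegral_const_mul (f := fun sv => gammaPDF (a+b) 1 sv * ind B sv) _ (hfab.mul hiB), betaInt_eq, gammaInt_eq]


def betaMeasure' (a b : ℝ) : Measure ℝ := volume.withDensity (betaKer a b)

lemma map2_measurable : Measurable (fun p : ℝ × ℝ => (p.1 / (p.1 + p.2), p.1 + p.2)) :=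
  (measurable_fst.div (measurable_fst.add measurable_snd)).prodMk
    (measurable_fst.add measurable_snd)

lemma betaMeasure'_prob {a b : ℝ} (ha : 0 < a) (hb : 0 < b) :
    IsProbabilityMeasure (betaMeasure' a b) := by
  haveI := isProbabilityMeasure_gammaMeasure ha one_pos
  haveI := isProbabilityMeasure_gammaMeasure hb one_pos
  haveI := isProbabilityMeasure_gammaMeasure (add_pos ha hb) one_pos
  constructor
  have h := prod_gamma_rect ha hb MeasurableSet.univ MeasurableSet.univ
  rw [Set.univ_prod_univ, Set.preimage_univ,
    measure_univ (μ := (gammaMeasure a 1).prod (gammaMeasure b 1)),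
    measure_univ (μ := gammaMeasure (a+b) 1), mul_one] at h
  exact h.symm

lemma map_beta_gamma {a b : ℝ} (ha : 0 < a) (hb : 0 < b) :
    Measure.map (fun p : ℝ × ℝ => (p.1 / (p.1 + p.2), p.1 + p.2))
        ((gammaMeasure a 1).prod (gammaMeasure b 1))
      = (betaMeasure' a b).prod (gammaMeasure (a+b) 1) := by
  haveI := isProbabilityMeasure_gammaMeasure ha one_pos
  haveI := isProbabilityMeasure_gammaMeasure hb one_pos
  haveI := isProbabilityMeasure_gammaMeasure (add_pos ha hb) one_pos
  haveI := betaMeasure'_prob ha hb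
  refine (Measure.prod_eq fun A B hA hB => ?_).symm
  rw [Measure.map_apply map2_measurable (hA.prod hB)]
  exact prod_gamma_rect ha hb hA hB

lemma gammaMeasure_Iic_zero {a r : ℝ} : gammaMeasure a r (Iic 0) = 0 := by
  rw [gammaMeasure, withDensity_apply _ measurableSet_Iic,
    lintegral_Iic_eq_lintegral_Iio_add_Icc _ le_rfl, lintegral_gammaPDF_of_nonpos le_rfl,
    Icc_self, setLIntegral_measure_zero _ _ Real.volume_singleton, add_zero]

lemma gammaMeasure_ae_pos {a r : ℝ} : ∀ᵐ x ∂(gammaMeasure a r), 0 < x := by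
  rw [ae_iff]
  have h : {x : ℝ | ¬ 0 < x} = Iic 0 := by ext x; simp
  rw [h]
  exact gammaMeasure_Iic_zero

def sumF (n : ℕ) : (Fin n → ℝ) → ℝ := fun x => ∑ i, x i

def pairF (n : ℕ) : (Fin n → ℝ) → (Fin n → ℝ) × ℝ :=
  fun x => (fun i => x i / sumF n x, sumF n x)

lemma sumF_measurable (n : ℕ) : Measurable (sumF n) :=
  Finset.measurable_sum Finset.univ (fun i _ => measurable_pi_apply i)

lemma pairF_measurable (n : ℕ) : Measurable (pairF n) :=
  (measurable_pi_lambda _ fun i => (measurable_pi_apply i).div (sumF_measurable n)).prodMk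
    (sumF_measurable n)


lemma gamma_pair_law (n : ℕ) (a : Fin (n+1) → ℝ) (ha : ∀ i, 0 < a i) :
    ∃ ν : Measure (Fin (n+1) → ℝ), IsProbabilityMeasure ν ∧
      Measure.map (pairF (n+1)) (Measure.pi fun i => gammaMeasure (a i) 1)
        = ν.prod (gammaMeasure (∑ i, a i) 1) := by
  induction n with
  | zero =>
    haveI : ∀ i : Fin 1, IsProbabilityMeasure (gammaMeasure (a i) 1) :=
      fun i => isProbabilityMeasure_gammaMeasure (ha i) one_pos
    haveI : ∀ i : Fin 1, SigmaFinite (gammaMeasure (a i) 1) := fun i => inferInstance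
    haveI := isProbabilityMeasure_gammaMeasure (ha 0) one_pos
    refine ⟨Measure.dirac (fun _ : Fin 1 => (1:ℝ)), inferInstance, ?_⟩
    have hgm : Measurable (fun y : ℝ => ((fun _ : Fin 1 => y / y), y)) :=
      (measurable_pi_lambda _ fun _ => measurable_id.div measurable_id).prodMk measurable_id
    have hfam : (fun i : Fin 1 => gammaMeasure (a i) 1) = fun _ => gammaMeasure (a 0) 1 := by
      funext i; rw [Subsingleton.elim i 0]
    have hemap : Measure.map (⇑(MeasurableEquiv.funUnique (Fin 1) ℝ))
        (Measure.pi fun i : Fin 1 => gammaMeasure (a i) 1) = gammaMeasure (a 0) 1 := by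
      rw [hfam]
      exact (measurePreserving_funUnique (gammaMeasure (a 0) 1) (Fin 1)).map_eq
    have hcomp : pairF 1 = (fun y : ℝ => ((fun _ : Fin 1 => y / y), y)) ∘
        ⇑(MeasurableEquiv.funUnique (Fin 1) ℝ) := by
      funext x
      have hx : ∀ i : Fin 1, x i = x 0 := fun i => by rw [Subsingleton.elim i 0]
      have hs : sumF 1 x = x 0 := by simp [sumF]
      have he : (MeasurableEquiv.funUnique (Fin 1) ℝ) x = x 0 := rfl
      simp only [pairF, Function.comp_apply, he, hs]
      congr 1
      funext i
      rw [hx i]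
    have hsum1 : (∑ i : Fin 1, a i) = a 0 := by simp
    rw [hsum1, hcomp, ← Measure.map_map hgm (MeasurableEquiv.funUnique (Fin 1) ℝ).measurable,
      hemap]
    have hae : (fun y : ℝ => ((fun _ : Fin 1 => y / y), y))
        =ᵐ[gammaMeasure (a 0) 1] (fun y : ℝ => ((fun _ : Fin 1 => (1:ℝ)), y)) := by
      filter_upwards [gammaMeasure_ae_pos] with y hy
      simp [div_self hy.ne']
    rw [Measure.map_congr hae, ← Measure.dirac_prod]
  | succ n IH =>
    haveI hPI : ∀ i : Fin (n+2), IsProbabilityMeasure (gammaMeasure (a i) 1) :=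
      fun i => isProbabilityMeasure_gammaMeasure (ha i) one_pos
    haveI : ∀ i : Fin (n+2), SigmaFinite (gammaMeasure (a i) 1) := fun i => inferInstance
    set a' : Fin (n+1) → ℝ := fun j => a j.castSucc with ha'_def
    haveI : ∀ j : Fin (n+1), IsProbabilityMeasure (gammaMeasure (a' j) 1) :=
      fun j => isProbabilityMeasure_gammaMeasure (ha _) one_pos
    haveI : ∀ j : Fin (n+1), SigmaFinite (gammaMeasure (a' j) 1) := fun j => inferInstance
    obtain ⟨ν', hν', hmap'⟩ := IH a' (fun j => ha _)
    set A' : ℝ := ∑ j, a' j with hA'_def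
    have hA' : 0 < A' := Finset.sum_pos (fun j _ => ha _) Finset.univ_nonempty
    have halast : 0 < a (Fin.last (n+1)) := ha _
    haveI := isProbabilityMeasure_gammaMeasure hA' one_pos
    haveI := isProbabilityMeasure_gammaMeasure halast one_pos
    haveI := isProbabilityMeasure_gammaMeasure (add_pos hA' halast) one_pos
    haveI := betaMeasure'_prob hA' halast
    set βm := betaMeasure' A' (a (Fin.last (n+1))) with hβ_def
    set μ' : Measure (Fin (n+1) → ℝ) := Measure.pi fun j => gammaMeasure (a' j) 1 with hμ'_def
    set Γl := gammaMeasure (a (Fin.last (n+1))) 1 with hΓl_def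
    set Γs := gammaMeasure (A' + a (Fin.last (n+1))) 1 with hΓs_def
    set m2 : ℝ × ℝ → ℝ × ℝ := fun p => (p.1 / (p.1 + p.2), p.1 + p.2) with hm2_def
    have hm2m : Measurable m2 := map2_measurable
    set Ψ : (Fin (n+1) → ℝ) × ℝ → (Fin (n+2) → ℝ) :=
      fun p => Fin.snoc (fun j => p.1 j * p.2) (1 - p.2) with hΨ_def
    have hΨm : Measurable Ψ := by
      apply measurable_pi_lambda
      intro i
      refine Fin.lastCases ?_ ?_ i
      · simp only [hΨ_def, Fin.snoc_last]
        exact measurable_const.sub measurable_snd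
      · intro j
        simp only [hΨ_def, Fin.snoc_castSucc]
        exact ((measurable_pi_apply j).comp measurable_fst).mul measurable_snd
    have hpairm := pairF_measurable (n+1)
    have hpair2m := pairF_measurable (n+2)
    set h : ℝ × (Fin (n+1) → ℝ) → (Fin (n+2) → ℝ) × ℝ :=
      (Prod.map Ψ (id : ℝ → ℝ)) ∘
        ⇑(MeasurableEquiv.prodAssoc
            (α := Fin (n+1) → ℝ) (β := ℝ) (γ := ℝ)).symm ∘
        (Prod.map (id : (Fin (n+1) → ℝ) → Fin (n+1) → ℝ) m2) ∘
        ⇑(MeasurableEquiv.prodAssoc (α := Fin (n+1) → ℝ) (β := ℝ) (γ := ℝ)) ∘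
        (Prod.map (pairF (n+1)) (id : ℝ → ℝ)) ∘ Prod.swap with hh_def
    -- compute the law of h
    have m1 : Measurable (Prod.swap : ℝ × (Fin (n+1) → ℝ) → (Fin (n+1) → ℝ) × ℝ) :=
      measurable_swap
    have m2m' : Measurable (Prod.map (pairF (n+1)) (id : ℝ → ℝ)) :=
      hpairm.prodMap measurable_id
    have m3 : Measurable
        (⇑(MeasurableEquiv.prodAssoc (α := Fin (n+1) → ℝ) (β := ℝ) (γ := ℝ))) :=
      MeasurableEquiv.measurable _
    have m4 : Measurable (Prod.map (id : (Fin (n+1) → ℝ) → Fin (n+1) → ℝ) m2) :=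
      measurable_id.prodMap hm2m
    have m5 : Measurable
        (⇑(MeasurableEquiv.prodAssoc (α := Fin (n+1) → ℝ) (β := ℝ) (γ := ℝ)).symm) :=
      MeasurableEquiv.measurable _
    have m6 : Measurable (Prod.map Ψ (id : ℝ → ℝ)) := hΨm.prodMap measurable_id
    have l1 : Measure.map Prod.swap (Γl.prod μ') = μ'.prod Γl := Measure.prod_swap
    have l2 : Measure.map (Prod.map (pairF (n+1)) (id : ℝ → ℝ)) (μ'.prod Γl)
        = (ν'.prod (gammaMeasure A' 1)).prod Γl := by
      rw [← Measure.map_prod_map _ _ hpairm measurable_id, hmap', Measure.map_id]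
    have l3 : Measure.map
          (⇑(MeasurableEquiv.prodAssoc (α := Fin (n+1) → ℝ) (β := ℝ) (γ := ℝ)))
          ((ν'.prod (gammaMeasure A' 1)).prod Γl)
        = ν'.prod ((gammaMeasure A' 1).prod Γl) := Measure.prodAssoc_prod
    have l4 : Measure.map (Prod.map (id : (Fin (n+1) → ℝ) → Fin (n+1) → ℝ) m2)
          (ν'.prod ((gammaMeasure A' 1).prod Γl)) = ν'.prod (βm.prod Γs) := by
      rw [← Measure.map_prod_map _ _ measurable_id hm2m, Measure.map_id, hΓl_def,
        map_beta_gamma hA' halast]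
    have l5 : Measure.map
          (⇑(MeasurableEquiv.prodAssoc (α := Fin (n+1) → ℝ) (β := ℝ) (γ := ℝ)).symm)
          (ν'.prod (βm.prod Γs)) = (ν'.prod βm).prod Γs := by
      rw [← Measure.prodAssoc_prod (μ := ν') (ν := βm) (τ := Γs), Measure.map_map m5 m3]
      simp
    have l6 : Measure.map (Prod.map Ψ (id : ℝ → ℝ)) ((ν'.prod βm).prod Γs)
        = (Measure.map Ψ (ν'.prod βm)).prod Γs := by
      rw [← Measure.map_prod_map _ _ hΨm measurable_id, Measure.map_id]
    have hhmap : Measure.map h (Γl.prod μ') = (Measure.map Ψ (ν'.prod βm)).prod Γs := by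
      rw [hh_def,
        ← Measure.map_map m6 (m5.comp (m4.comp (m3.comp (m2m'.comp m1)))),
        ← Measure.map_map m5 (m4.comp (m3.comp (m2m'.comp m1))),
        ← Measure.map_map m4 (m3.comp (m2m'.comp m1)),
        ← Measure.map_map m3 (m2m'.comp m1),
        ← Measure.map_map m2m' m1,
        l1, l2, l3, l4, l5, l6]
    -- transport along the equivalence
    set e := MeasurableEquiv.piFinSuccAbove (fun _ : Fin (n+2) => ℝ) (Fin.last (n+1))
      with he_def
    have hemap : Measure.map ⇑e (Measure.pi fun i => gammaMeasure (a i) 1) = Γl.prod μ' := by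
      have hfam : (fun j : Fin (n+1) =>
          gammaMeasure (a ((Fin.last (n+1)).succAbove j)) 1) = fun j => gammaMeasure (a' j) 1 := by
        funext j
        rw [Fin.succAbove_last]
      rw [(measurePreserving_piFinSuccAbove (fun i => gammaMeasure (a i) 1)
        (Fin.last (n+1))).map_eq, hfam]
    have hsplit : Measure.map (pairF (n+2)) (Measure.pi fun i => gammaMeasure (a i) 1)
        = Measure.map (pairF (n+2) ∘ ⇑e.symm) (Γl.prod μ') := by
      rw [← hemap, Measure.map_map (hpair2m.comp e.symm.measurable) e.measurable]
      congr 1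
      funext x
      simp
    -- a.e. positivity
    have h1 : ∀ᵐ q : ℝ × (Fin (n+1) → ℝ) ∂(Γl.prod μ'), 0 < q.1 := by
      rw [ae_iff]
      have hset : {q : ℝ × (Fin (n+1) → ℝ) | ¬ 0 < q.1} = (Iic 0) ×ˢ univ := by
        ext q; simp
      rw [hset, Measure.prod_prod, hΓl_def, gammaMeasure_Iic_zero, zero_mul]
    have h2 : ∀ᵐ q : ℝ × (Fin (n+1) → ℝ) ∂(Γl.prod μ'), ∀ j, 0 < q.2 j := by
      have hz : μ' {z : Fin (n+1) → ℝ | ¬ ∀ j, 0 < z j} = 0 := by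
        have hsub : {z : Fin (n+1) → ℝ | ¬ ∀ j, 0 < z j}
            ⊆ ⋃ j, Function.eval j ⁻¹' (Iic 0) := by
          intro z hz
          push_neg at hz
          obtain ⟨j, hj⟩ := hz
          exact mem_iUnion.2 ⟨j, by simpa using hj⟩
        refine measure_mono_null hsub (measure_iUnion_null fun j => ?_)
        exact Measure.pi_eval_preimage_null _ gammaMeasure_Iic_zero
      rw [ae_iff]
      have hset : {q : ℝ × (Fin (n+1) → ℝ) | ¬ ∀ j, 0 < q.2 j}
          = univ ×ˢ {z : Fin (n+1) → ℝ | ¬ ∀ j, 0 < z j} := by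
        ext q; simp
      rw [hset, Measure.prod_prod, hz, mul_zero]
    -- the a.e. identification of the two maps
    have haeq : pairF (n+2) ∘ ⇑e.symm =ᵐ[Γl.prod μ'] h := by
      filter_upwards [h1, h2] with q hy hz
      obtain ⟨y, z⟩ := q
      have hS' : 0 < sumF (n+1) z := Finset.sum_pos (fun j _ => hz j) Finset.univ_nonempty
      have hs : 0 < sumF (n+1) z + y := by linarith
      have hesymm : (⇑e.symm) (y, z) = Fin.snoc z y := by
        rw [he_def]
        simp [MeasurableEquiv.piFinSuccAbove_symm_apply, Fin.insertNthEquiv,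
          Fin.insertNth_last']
      have hsum : sumF (n+2) (Fin.snoc z y) = sumF (n+1) z + y := by
        simp [sumF, Fin.sum_univ_castSucc]
      have hhq : h (y, z) = (Ψ ((fun j => z j / sumF (n+1) z),
          sumF (n+1) z / (sumF (n+1) z + y)), sumF (n+1) z + y) := rfl
      simp only [Function.comp_apply, hesymm, hhq, pairF, hsum]
      refine Prod.ext ?_ rfl
      funext i
      refine Fin.lastCases ?_ ?_ i
      · simp only [Fin.snoc_last, hΨ_def]
        field_simp
        ring
      · intro j
        simp only [Fin.snoc_castSucc, hΨ_def]
        field_simp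
    refine ⟨Measure.map Ψ (ν'.prod βm), Measure.isProbabilityMeasure_map hΨm.aemeasurable, ?_⟩
    have hsuma : (∑ i : Fin (n+2), a i) = A' + a (Fin.last (n+1)) := by
      rw [Fin.sum_univ_castSucc]
    rw [hsuma, hsplit, Measure.map_congr haeq, hhmap]


lemma telescope (n : ℕ) (g : Fin (n+1) → ℝ) :
    ∑ i : Fin n, (g i.succ - g i.castSucc) = g (Fin.last n) - g 0 := by
  induction n with
  | zero => simp [show Fin.last 0 = 0 from rfl]
  | succ n IH =>
    rw [Fin.sum_univ_castSucc]
    have h := IH (fun j => g j.castSucc)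
    simp only [Fin.succ_castSucc]
    rw [h, Fin.succ_last, Fin.castSucc_zero]
    ring


end GammaBridgeProofAux

open GammaBridgeProofAux


/-- For `r > 0` and any partition `0 = t_0 < t_1 < ⋯ < t_n = r`, the vector of
increments `(ζ^r_{t_1} - ζ^r_{t_0}, …, ζ^r_{t_n} - ζ^r_{t_{n-1}})` of the gamma bridge
`ζ^r_t = γ_{t ∧ r}/γ_r` is independent of the random variable `γ_r`. -/
theorem gamma_bridge_increments_indep_of_endpoint
    {Ω : Type*} [MeasurableSpace Ω] (P : Measure Ω) [IsProbabilityMeasure P]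
    (γ : ℝ → Ω → ℝ) (hγ : IsStdGammaProcess P γ) (r : ℝ) (hr : 0 < r)
    (ζ : ℝ → Ω → ℝ) (hζ : ∀ t ω, ζ t ω = γ (min t r) ω / γ r ω)
    (n : ℕ) (t : Fin (n + 1) → ℝ) (hmono : StrictMono t)
    (h0 : t 0 = 0) (hlast : t (Fin.last n) = r) :
    IndepFun (fun ω => fun i : Fin n => ζ (t i.succ) ω - ζ (t i.castSucc) ω) (γ r) P := by
  cases n with
  | zero =>
    exfalso
    have : t 0 = r := by rw [show (0 : Fin 1) = Fin.last 0 from rfl]; exact hlast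
    rw [h0] at this
    exact hr.ne this
  | succ m =>
    have hd : ∀ i : Fin (m+1), 0 < t i.succ - t i.castSucc :=
      fun i => sub_pos.2 (hmono (Fin.castSucc_lt_succ (i := i)))
    have ht0 : ∀ i, 0 ≤ t i := fun i => h0 ▸ hmono.monotone (Fin.zero_le i)
    have htr : ∀ i, t i ≤ r := fun i => hlast ▸ hmono.monotone (Fin.le_last i)
    set d : Fin (m+1) → ℝ := fun i => t i.succ - t i.castSucc with hd_def
    set J : Ω → Fin (m+1) → ℝ := fun ω i => γ (t i.succ) ω - γ (t i.castSucc) ω with hJ_def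
    have hXm : ∀ i : Fin (m+1), Measurable (fun ω => γ (t i.succ) ω - γ (t i.castSucc) ω) :=
      fun i => (hγ.measurable _).sub (hγ.measurable _)
    have hJm : Measurable J := measurable_pi_lambda _ fun i => hXm i
    have hindep := hγ.indep_incr (m+1) t hmono.monotone ht0
    haveI : ∀ i : Fin (m+1), IsProbabilityMeasure (gammaMeasure (d i) 1) :=
      fun i => isProbabilityMeasure_gammaMeasure (hd i) one_pos
    haveI : ∀ i : Fin (m+1), SigmaFinite (gammaMeasure (d i) 1) := fun i => inferInstance
    have hlaw : ∀ i : Fin (m+1),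
        P.map (fun ω => γ (t i.succ) ω - γ (t i.castSucc) ω) = gammaMeasure (d i) 1 :=
      fun i => hγ.incr_law _ _ (ht0 _) (hmono (Fin.castSucc_lt_succ (i := i)))
    have hmapJ : Measure.pi (fun i => gammaMeasure (d i) 1) = P.map J := by
      refine Measure.pi_eq fun s hs => ?_
      rw [Measure.map_apply hJm (MeasurableSet.univ_pi hs)]
      have hpre : J ⁻¹' (univ.pi s)
          = ⋂ i, (fun ω => γ (t i.succ) ω - γ (t i.castSucc) ω) ⁻¹' (s i) := by
        ext ω
        simp [hJ_def, Set.mem_univ_pi]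
      rw [hpre, hindep.meas_iInter (fun i => ⟨s i, hs i, rfl⟩)]
      refine Finset.prod_congr rfl fun i _ => ?_
      rw [← hlaw i, Measure.map_apply (hXm i) (hs i)]
    obtain ⟨ν, hν, hpair⟩ := gamma_pair_law m d hd
    haveI : IsProbabilityMeasure (gammaMeasure (∑ i, d i) 1) :=
      isProbabilityMeasure_gammaMeasure (Finset.sum_pos (fun i _ => hd i) Finset.univ_nonempty) one_pos
    have hVm : Measurable (fun x : Fin (m+1) → ℝ => fun i => x i / sumF (m+1) x) :=
      measurable_pi_lambda _ fun i => (measurable_pi_apply i).div (sumF_measurable _)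
    have hSm := sumF_measurable (m+1)
    have hrect : ∀ (s : Set (Fin (m+1) → ℝ)) (u : Set ℝ), MeasurableSet s → MeasurableSet u →
        P (J ⁻¹' (pairF (m+1) ⁻¹' (s ×ˢ u))) = ν s * gammaMeasure (∑ i, d i) 1 u := by
      intro s u hs hu
      rw [← Measure.map_apply hJm ((pairF_measurable _) (hs.prod hu)), ← hmapJ,
        ← Measure.map_apply (pairF_measurable _) (hs.prod hu), hpair, Measure.prod_prod]
    have hkey : IndepFun (fun ω => fun i => J ω i / sumF (m+1) (J ω))
        (fun ω => sumF (m+1) (J ω)) P := by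
      rw [indepFun_iff_measure_inter_preimage_eq_mul]
      intro s u hs hu
      have e1 : (fun ω => fun i => J ω i / sumF (m+1) (J ω)) ⁻¹' s
            ∩ (fun ω => sumF (m+1) (J ω)) ⁻¹' u
          = J ⁻¹' (pairF (m+1) ⁻¹' (s ×ˢ u)) := by
        ext ω
        simp [pairF, Set.mem_prod]
      have e2 : (fun ω => fun i => J ω i / sumF (m+1) (J ω)) ⁻¹' s
          = J ⁻¹' (pairF (m+1) ⁻¹' (s ×ˢ univ)) := by
        ext ω
        simp [pairF, Set.mem_prod]
      have e3 : (fun ω => sumF (m+1) (J ω)) ⁻¹' u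
          = J ⁻¹' (pairF (m+1) ⁻¹' ((univ : Set (Fin (m+1) → ℝ)) ×ˢ u)) := by
        ext ω
        simp [pairF, Set.mem_prod]
      rw [e1, e2, e3, hrect s u hs hu, hrect s univ hs MeasurableSet.univ,
        hrect univ u MeasurableSet.univ hu, measure_univ, measure_univ, mul_one, one_mul]
    have hae1 : (fun ω => γ r ω) =ᵐ[P] (fun ω => sumF (m+1) (J ω)) := by
      filter_upwards [hγ.zero] with ω hω
      have htel : sumF (m+1) (J ω) = γ (t (Fin.last (m+1))) ω - γ (t 0) ω :=
        telescope (m+1) (fun k => γ (t k) ω)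
      rw [htel, hlast, h0, hω, sub_zero]
    have hae2 : (fun ω => fun i : Fin (m+1) => ζ (t i.succ) ω - ζ (t i.castSucc) ω)
        =ᵐ[P] (fun ω => fun i => J ω i / sumF (m+1) (J ω)) := by
      filter_upwards [hae1] with ω hω
      funext i
      rw [hζ, hζ, min_eq_left (htr i.succ), min_eq_left (htr i.castSucc),
        div_sub_div_same]
      have : γ r ω = sumF (m+1) (J ω) := hω
      rw [this]
    exact hkey.congr hae2.symm hae1.symm
end
end

section
/- Let 0 < t < u < r and let g : ℝ → ℝ be bounded measurable. Then P-a.s., E[g(ζ^r_u) | σ(ζ^r_t)] = G(ζ^r_t), where for x ∈ (0,1), G(x) := ∫_x^1 g(y) · [Γ(r−t)/(Γ(u−t)Γ(r−u))] · (y−x)^{u−t−1}(1−y)^{r−u−1}/(1−x)^{r−t−1} dy. In other words, the regular conditional law of ζ^r_u given ζ^r_t = x ∈ (0,1) has density Γ(r−t)/(Γ(u−t)Γ(r−u)) · (y−x)^{u−t−1}(1−y)^{r−u−1}/(1−x)^{r−t−1} · 1_{x<y<1} in y. -/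
open MeasureTheory ProbabilityTheory Real Set Filter
open scoped ENNReal

noncomputable section

namespace GammaBridgeAux

/-- real-valued beta density -/
def betaPDFReal (a b w : ℝ) : ℝ :=
  if w ∈ Set.Ioo (0:ℝ) 1 then
    Real.Gamma (a+b) / (Real.Gamma a * Real.Gamma b) * w ^ (a-1) * (1-w) ^ (b-1)
  else 0

lemma betaPDFReal_nonneg {a b : ℝ} (ha : 0 < a) (hb : 0 < b) (w : ℝ) :
    0 ≤ betaPDFReal a b w := by
  unfold betaPDFReal
  split_ifs with h
  · have := Real.Gamma_pos_of_pos ha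
    have := Real.Gamma_pos_of_pos hb
    have := Real.Gamma_pos_of_pos (add_pos ha hb)
    have h1 : (0:ℝ) ≤ w := h.1.le
    have h2 : (0:ℝ) ≤ 1 - w := by linarith [h.2]
    positivity
  · exact le_refl 0

lemma measurable_betaPDFReal (a b : ℝ) : Measurable (betaPDFReal a b) := by
  unfold betaPDFReal
  apply Measurable.ite measurableSet_Ioo
  · exact (((measurable_id'.pow_const _).const_mul _).mul
      ((measurable_const.sub measurable_id').pow_const _))
  · exact measurable_const

def betaPDF (a b : ℝ) (w : ℝ) : ℝ≥0∞ := ENNReal.ofReal (betaPDFReal a b w)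

lemma measurable_betaPDF (a b : ℝ) : Measurable (betaPDF a b) :=
  (measurable_betaPDFReal a b).ennreal_ofReal

def betaMeasure (a b : ℝ) : Measure ℝ := volume.withDensity (betaPDF a b)

end GammaBridgeAux
namespace GammaBridgeAux

lemma lintegral_scale {s : ℝ} (hs : 0 < s) (f : ℝ → ℝ≥0∞) (hf : Measurable f) :
    ∫⁻ y, f y = ENNReal.ofReal s * ∫⁻ w, f (s * w) := by
  have hmap : Measure.map (fun x => s * x) volume = ENNReal.ofReal |s⁻¹| • volume :=
    Real.map_volume_mul_left (ne_of_gt hs)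
  have h1 : ∫⁻ w, f (s * w) = ∫⁻ y, f y ∂(Measure.map (fun x => s * x) volume) :=
    (lintegral_map hf (measurable_const_mul s)).symm
  rw [h1, hmap, lintegral_smul_measure, smul_eq_mul, ← mul_assoc, ← ENNReal.ofReal_mul hs.le,
    abs_of_pos (inv_pos.mpr hs), mul_inv_cancel₀ (ne_of_gt hs), ENNReal.ofReal_one, one_mul]

lemma lintegral_shift (y : ℝ) (f : ℝ → ℝ≥0∞) (hf : Measurable f) :
    ∫⁻ z, f (y + z) = ∫⁻ x, f x := by
  conv_rhs => rw [← map_add_left_eq_self volume y]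
  rw [lintegral_map hf (measurable_const_add y)]

lemma gammaMeasure_Iic_zero {a : ℝ} : gammaMeasure a 1 (Iic (0:ℝ)) = 0 := by
  rw [gammaMeasure, withDensity_apply _ measurableSet_Iic]
  have h : Iic (0:ℝ) ⊆ Iio 0 ∪ {0} := by
    intro x hx
    rcases lt_or_eq_of_le (mem_Iic.mp hx) with h | h
    · exact Or.inl h
    · exact Or.inr (by simp [h])
  refine le_antisymm ?_ zero_le
  calc ∫⁻ x in Iic 0, gammaPDF a 1 x
      ≤ ∫⁻ x in Iio 0 ∪ {0}, gammaPDF a 1 x := lintegral_mono_set h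
    _ ≤ (∫⁻ x in Iio 0, gammaPDF a 1 x) + ∫⁻ x in ({0}: Set ℝ), gammaPDF a 1 x :=
        lintegral_union_le _ _ _
    _ = 0 := by
        rw [lintegral_gammaPDF_of_nonpos le_rfl, setLIntegral_measure_zero _ _ Real.volume_singleton]
        simp

lemma gammaMeasure_ae_pos {a : ℝ} : ∀ᵐ x ∂(gammaMeasure a 1), 0 < x := by
  rw [ae_iff]
  have : {x : ℝ | ¬ 0 < x} = Iic 0 := by ext x; simp
  rw [this]
  exact gammaMeasure_Iic_zero

lemma gammaPDF_meas (a : ℝ) : Measurable (gammaPDF a 1) :=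
  (measurable_gammaPDFReal a 1).ennreal_ofReal

end GammaBridgeAux

namespace GammaBridgeAux

/-- the key pointwise density identity -/
lemma density_identity {a b : ℝ} (ha : 0 < a) (hb : 0 < b) {s w : ℝ} (hs : 0 < s)
    (hw0 : w ≠ 0) (hw1 : w ≠ 1) :
    ENNReal.ofReal s * (gammaPDF a 1 (s * w) * gammaPDF b 1 (s - s * w)) =
      gammaPDF (a + b) 1 s * betaPDF a b w := by
  rcases lt_trichotomy w 0 with hw | hw | hw
  · rw [gammaPDF_of_neg (mul_neg_of_pos_of_neg hs hw)]
    have : w ∉ Ioo (0:ℝ) 1 := fun h => absurd h.1 (not_lt.mpr hw.le)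
    rw [betaPDF, betaPDFReal, if_neg this]
    simp
  · exact absurd hw.symm (Ne.symm hw0)
  rcases lt_trichotomy w 1 with hw2 | hw2 | hw2
  · -- main case : 0 < w < 1
    have hw1' : (0:ℝ) < 1 - w := by linarith
    have hsw : (0:ℝ) ≤ s * w := by positivity
    have hsw2 : (0:ℝ) ≤ s - s * w := by nlinarith
    rw [gammaPDF_of_nonneg hsw, gammaPDF_of_nonneg hsw2, gammaPDF_of_nonneg hs.le,
      betaPDF, betaPDFReal, if_pos (Set.mem_Ioo.mpr ⟨hw, hw2⟩)]
    have hga := Real.Gamma_pos_of_pos ha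
    have hgb := Real.Gamma_pos_of_pos hb
    have hgab := Real.Gamma_pos_of_pos (add_pos ha hb)
    rw [← ENNReal.ofReal_mul (by positivity), ← ENNReal.ofReal_mul (by positivity),
      ← ENNReal.ofReal_mul (by positivity)]
    congr 1
    have e1 : s - s * w = s * (1 - w) := by ring
    rw [e1, Real.one_rpow, Real.mul_rpow hs.le hw.le, Real.mul_rpow hs.le hw1'.le]
    simp only [Real.one_rpow]
    have e2 : s ^ (a + b - 1) = s ^ (a - 1) * s ^ (b - 1) * s := by
      rw [show a + b - 1 = a - 1 + (b - 1) + 1 by ring, Real.rpow_add hs,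
        Real.rpow_add hs, Real.rpow_one]
    have e3 : Real.exp (-(1 * (s * w))) * Real.exp (-(1 * (s * (1 - w)))) =
        Real.exp (-(1 * s)) := by
      rw [← Real.exp_add]
      congr 1
      ring
    rw [e2, ← e3]
    field_simp
  · -- w = 1
    exact absurd hw2 hw1
  · -- w > 1
    have : s - s * w < 0 := by nlinarith
    rw [gammaPDF_of_neg this]
    have : w ∉ Ioo (0:ℝ) 1 := fun h => absurd h.2 (not_lt.mpr hw2.le)
    rw [betaPDF, betaPDFReal, if_neg this]
    simp

end GammaBridgeAux

namespace GammaBridgeAux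

lemma gammaPDF_ne_top {a r x : ℝ} : gammaPDF a r x ≠ ⊤ := ENNReal.ofReal_ne_top

lemma betaPDF_ne_top {a b x : ℝ} : betaPDF a b x ≠ ⊤ := ENNReal.ofReal_ne_top

lemma ae_ne_zero : ∀ᵐ s : ℝ, s ≠ 0 := by
  rw [ae_iff]
  have : {s : ℝ | ¬ s ≠ 0} = {0} := by ext s; simp
  rw [this]
  exact Real.volume_singleton

lemma ae_ne_zero_one : ∀ᵐ w : ℝ, w ≠ 0 ∧ w ≠ 1 := by
  rw [ae_iff]
  have : {w : ℝ | ¬ (w ≠ 0 ∧ w ≠ 1)} = {0, 1} := by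
    ext w
    simp only [Set.mem_setOf_eq, not_and_or, not_not, Set.mem_insert_iff, Set.mem_singleton_iff]
  rw [this]
  exact measure_union_null Real.volume_singleton Real.volume_singleton

/-- THE key substitution identity. -/
lemma star {a b : ℝ} (ha : 0 < a) (hb : 0 < b) (φ : ℝ → ℝ → ℝ≥0∞)
    (hφ : Measurable (Function.uncurry φ)) :
    ∫⁻ y, ∫⁻ z, gammaPDF a 1 y * gammaPDF b 1 z * φ (y + z) (y / (y + z)) =
      ∫⁻ s, ∫⁻ w, gammaPDF (a + b) 1 s * betaPDF a b w * φ s w := by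
  have hmφ : ∀ y : ℝ, Measurable fun s => φ s (y / s) := fun y =>
    hφ.comp (measurable_id.prodMk (measurable_const.div measurable_id))
  have hmφ2 : ∀ s : ℝ, Measurable (φ s) := fun s =>
    hφ.comp (measurable_const.prodMk measurable_id)
  -- inner function after shift
  set F : ℝ → ℝ → ℝ≥0∞ := fun y s => gammaPDF a 1 y * gammaPDF b 1 (s - y) * φ s (y / s) with hF
  have hmF : ∀ y, Measurable (F y) := fun y =>
    ((measurable_const.mul ((gammaPDF_meas b).comp (measurable_id.sub measurable_const))).mul
      (hmφ y))
  have step1 : ∀ y : ℝ, ∫⁻ z, gammaPDF a 1 y * gammaPDF b 1 z * φ (y + z) (y / (y + z)) =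
      ∫⁻ s, F y s := by
    intro y
    rw [← lintegral_shift y (F y) (hmF y)]
    congr 1
    funext z
    simp only [hF, add_sub_cancel_left]
  simp_rw [step1]
  -- swap
  have hmF2 : Measurable (Function.uncurry F) := by
    apply Measurable.mul
    refine Measurable.mul (f := fun p : ℝ × ℝ => gammaPDF a 1 p.1)
      (g := fun p : ℝ × ℝ => gammaPDF b 1 (p.2 - p.1)) ?_ ?_
    · exact (gammaPDF_meas a).comp measurable_fst
    · exact (gammaPDF_meas b).comp (measurable_snd.sub measurable_fst)
    · exact hφ.comp (measurable_snd.prodMk (measurable_fst.div measurable_snd))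
  rw [lintegral_lintegral_swap hmF2.aemeasurable]
  -- pointwise in s
  refine lintegral_congr_ae ?_
  filter_upwards [ae_ne_zero] with s hs
  rcases lt_or_gt_of_ne hs with hneg | hpos
  · -- s < 0 : both sides vanish
    have h1 : ∫⁻ y, F y s = 0 := by
      rw [← lintegral_zero]
      refine lintegral_congr_ae ?_
      filter_upwards [ae_ne_zero] with y hy
      rcases lt_or_gt_of_ne hy with hyneg | hypos
      · simp [hF, gammaPDF_of_neg hyneg]
      · have : s - y < 0 := by linarith
        simp [hF, gammaPDF_of_neg this]
    rw [h1]
    rw [← lintegral_zero]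
    refine lintegral_congr fun w => ?_
    simp [gammaPDF_of_neg hneg]
  · -- s > 0
    have hsub := lintegral_scale hpos (F · s)
      ((((gammaPDF_meas a)).mul ((gammaPDF_meas b).comp
        (measurable_const.sub measurable_id))).mul
        ((hmφ2 s).comp (measurable_id.div measurable_const)))
    calc ∫⁻ y, F y s = ENNReal.ofReal s * ∫⁻ w, F (s * w) s := hsub
      _ = ∫⁻ w, ENNReal.ofReal s * F (s * w) s := by
          rw [lintegral_const_mul' _ _ ENNReal.ofReal_ne_top]
      _ = ∫⁻ w, gammaPDF (a + b) 1 s * betaPDF a b w * φ s w := by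
          refine lintegral_congr_ae ?_
          filter_upwards [ae_ne_zero_one] with w ⟨hw0, hw1⟩
          have hdiv : s * w / s = w := by
            rw [mul_comm, mul_div_assoc, div_self (ne_of_gt hpos), mul_one]
          have := density_identity ha hb hpos hw0 hw1
          calc ENNReal.ofReal s * F (s * w) s
              = (ENNReal.ofReal s * (gammaPDF a 1 (s * w) * gammaPDF b 1 (s - s * w))) *
                  φ s w := by simp only [hF, hdiv]; ring
            _ = gammaPDF (a + b) 1 s * betaPDF a b w * φ s w := by rw [this]

lemma betaMeasure_univ {a b : ℝ} (ha : 0 < a) (hb : 0 < b) :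
    betaMeasure a b Set.univ = 1 := by
  have h := star ha hb (fun _ _ => 1) measurable_const
  simp only [mul_one] at h
  have lhs : ∫⁻ y, ∫⁻ z, gammaPDF a 1 y * gammaPDF b 1 z = 1 := by
    have : ∀ y : ℝ, ∫⁻ z, gammaPDF a 1 y * gammaPDF b 1 z = gammaPDF a 1 y := by
      intro y
      rw [lintegral_const_mul' _ _ gammaPDF_ne_top, lintegral_gammaPDF_eq_one hb one_pos,
        mul_one]
    simp_rw [this]
    exact lintegral_gammaPDF_eq_one ha one_pos
  have rhs : ∫⁻ s, ∫⁻ w, gammaPDF (a + b) 1 s * betaPDF a b w =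
      betaMeasure a b Set.univ := by
    have h2 : ∀ s : ℝ, ∫⁻ w, gammaPDF (a + b) 1 s * betaPDF a b w =
        gammaPDF (a + b) 1 s * betaMeasure a b Set.univ := by
      intro s
      rw [lintegral_const_mul' _ _ gammaPDF_ne_top]
      congr 1
      rw [betaMeasure, withDensity_apply _ MeasurableSet.univ, Measure.restrict_univ]
    simp_rw [h2]
    rw [lintegral_mul_const _ (gammaPDF_meas (a + b)),
      lintegral_gammaPDF_eq_one (add_pos ha hb) one_pos, one_mul]
  rw [lhs] at h
  rw [← rhs, ← h]

end GammaBridgeAux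

namespace GammaBridgeAux

lemma integral_betaMeasure_eq {a b : ℝ} (ha : 0 < a) (hb : 0 < b) (g : ℝ → ℝ) {v : ℝ}
    (hv : v ∈ Set.Ioo (0:ℝ) 1) :
    ∫ w, g (v + (1 - v) * w) ∂(betaMeasure a b) =
      ∫ y in v..(1:ℝ), g y * (Real.Gamma (a + b) / (Real.Gamma a * Real.Gamma b)) *
        ((y - v) ^ (a - 1) * (1 - y) ^ (b - 1) / (1 - v) ^ (a + b - 1)) := by
  obtain ⟨hv0, hv1⟩ := hv
  have hv1' : (0:ℝ) < 1 - v := by linarith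
  set c : ℝ := Real.Gamma (a + b) / (Real.Gamma a * Real.Gamma b) with hc
  set f : ℝ → ℝ := fun w => g (v + (1 - v) * w) with hfdef
  set fG : ℝ → ℝ := fun y => g y * c * ((y - v) ^ (a - 1) * (1 - y) ^ (b - 1) /
    (1 - v) ^ (a + b - 1)) with hfG
  have h0 : betaMeasure a b =
      volume.withDensity fun w => ((betaPDFReal a b w).toNNReal : ℝ≥0∞) := rfl
  rw [h0, integral_withDensity_eq_integral_smul (measurable_betaPDFReal a b).real_toNNReal]
  have h1 : ∀ w, (betaPDFReal a b w).toNNReal • f w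
      = (Set.Ioo (0:ℝ) 1).indicator (fun w => c * w ^ (a-1) * (1-w) ^ (b-1) * f w) w := by
    intro w
    rw [NNReal.smul_def, Real.coe_toNNReal _ (betaPDFReal_nonneg ha hb w)]
    by_cases h : w ∈ Set.Ioo (0:ℝ) 1
    · rw [betaPDFReal, if_pos h, Set.indicator_of_mem h, smul_eq_mul, ← hc]
    · rw [betaPDFReal, if_neg h, Set.indicator_of_notMem h, zero_smul]
  refine (integral_congr_ae (ae_of_all _ h1)).trans ?_
  rw [integral_indicator measurableSet_Ioo, ← integral_Ioc_eq_integral_Ioo,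
    ← intervalIntegral.integral_of_le (zero_le_one)]
  have h2 := intervalIntegral.smul_integral_comp_mul_add (a := (0:ℝ)) (b := 1) fG (1-v) v
  rw [show (1-v)*0+v = v by ring, show (1-v)*1+v = 1 by ring] at h2
  rw [← h2, ← intervalIntegral.integral_smul]
  refine intervalIntegral.integral_congr fun w hw => ?_
  rw [Set.uIcc_of_le zero_le_one] at hw
  obtain ⟨hw0, hw1⟩ := hw
  have e0 : (1-v)*w + v = v + (1-v)*w := by ring
  have e1 : (1-v)*w + v - v = (1-v)*w := by ring
  have e2 : 1 - ((1-v)*w + v) = (1-v)*(1-w) := by ring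
  have e3 : (1-v) ^ (a + b - 1) = (1-v) ^ (a-1) * (1-v) ^ (b-1) * (1-v) := by
    rw [show a + b - 1 = a - 1 + (b - 1) + 1 by ring, Real.rpow_add hv1',
      Real.rpow_add hv1', Real.rpow_one]
  have hKa : (0:ℝ) < (1-v) ^ (a-1) := Real.rpow_pos_of_pos hv1' _
  have hKb : (0:ℝ) < (1-v) ^ (b-1) := Real.rpow_pos_of_pos hv1' _
  show c * w ^ (a-1) * (1-w) ^ (b-1) * f w = (1-v) • fG ((1-v)*w + v)
  rw [smul_eq_mul, hfG]
  simp only []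
  rw [e1, e2, e0, Real.mul_rpow hv1'.le (by linarith : (0:ℝ) ≤ w),
    Real.mul_rpow hv1'.le (by linarith : (0:ℝ) ≤ 1 - w), e3, hfdef]
  field_simp

lemma measurable_param_integral (F : ℝ → ℝ → ℝ) (hF : Measurable (Function.uncurry F)) :
    Measurable fun x => ∫ y in x..(1:ℝ), F x y := by
  have key : ∀ (S : Set (ℝ × ℝ)), MeasurableSet S →
      Measurable fun x => ∫ y, S.indicator (Function.uncurry F) (x, y) := fun S hS =>
    (hF.stronglyMeasurable.indicator hS).integral_prod_right'.measurable
  have h1 : MeasurableSet {p : ℝ × ℝ | p.1 < p.2 ∧ p.2 ≤ 1} :=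
    (measurableSet_lt measurable_fst measurable_snd).inter
      (measurableSet_le measurable_snd measurable_const)
  have h2 : MeasurableSet {p : ℝ × ℝ | 1 < p.2 ∧ p.2 ≤ p.1} :=
    (measurableSet_lt measurable_const measurable_snd).inter
      (measurableSet_le measurable_snd measurable_fst)
  have heq : (fun x => ∫ y in x..(1:ℝ), F x y)
      = fun x => (∫ y, ({p : ℝ × ℝ | p.1 < p.2 ∧ p.2 ≤ 1}).indicator (Function.uncurry F) (x, y))
        - ∫ y, ({p : ℝ × ℝ | 1 < p.2 ∧ p.2 ≤ p.1}).indicator (Function.uncurry F) (x, y) := by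
    funext x
    have i1 : ∀ y : ℝ, ({p : ℝ × ℝ | p.1 < p.2 ∧ p.2 ≤ 1}).indicator (Function.uncurry F) (x, y)
        = (Set.Ioc x 1).indicator (F x) y := by
      intro y
      unfold Set.indicator
      simp only [Set.mem_setOf_eq, Set.mem_Ioc, Function.uncurry]
    have i2 : ∀ y : ℝ, ({p : ℝ × ℝ | 1 < p.2 ∧ p.2 ≤ p.1}).indicator (Function.uncurry F) (x, y)
        = (Set.Ioc 1 x).indicator (F x) y := by
      intro y
      unfold Set.indicator
      simp only [Set.mem_setOf_eq, Set.mem_Ioc, Function.uncurry]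
    simp_rw [i1, i2]
    rw [integral_indicator measurableSet_Ioc, integral_indicator measurableSet_Ioc]
    rfl
  rw [heq]
  exact (key _ h1).sub (key _ h2)

end GammaBridgeAux

namespace GammaBridgeAux

lemma star_measure {a b : ℝ} (ha : 0 < a) (hb : 0 < b) (φ : ℝ → ℝ → ℝ≥0∞)
    (hφ : Measurable (Function.uncurry φ)) :
    ∫⁻ y, (∫⁻ z, φ (y + z) (y / (y + z)) ∂(gammaMeasure b 1)) ∂(gammaMeasure a 1) =
      ∫⁻ s, (∫⁻ w, φ s w ∂(betaMeasure a b)) ∂(gammaMeasure (a + b) 1) := by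
  haveI : IsProbabilityMeasure (betaMeasure a b) := ⟨betaMeasure_univ ha hb⟩
  have hφ2 : ∀ s, Measurable (φ s) := fun s =>
    hφ.comp (measurable_const.prodMk measurable_id)
  have hφswap : Measurable fun p : ℝ × ℝ => φ (p.1 + p.2) (p.1 / (p.1 + p.2)) :=
    hφ.comp ((measurable_fst.add measurable_snd).prodMk
      (measurable_fst.div (measurable_fst.add measurable_snd)))
  -- unfold the inner gamma measure
  have h1 : ∀ y : ℝ, ∫⁻ z, φ (y + z) (y / (y + z)) ∂(gammaMeasure b 1)
      = ∫⁻ z, gammaPDF b 1 z * φ (y + z) (y / (y + z)) := by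
    intro y
    have hgm : Measurable fun z : ℝ => φ (y + z) (y / (y + z)) :=
      hφ.comp ((measurable_const.add measurable_id).prodMk
        (measurable_const.div (measurable_const.add measurable_id)))
    rw [gammaMeasure, lintegral_withDensity_eq_lintegral_mul _ (gammaPDF_meas b) hgm]
    rfl
  simp_rw [h1]
  -- unfold the outer gamma measure
  rw [gammaMeasure, lintegral_withDensity_eq_lintegral_mul _ (gammaPDF_meas a)
    (by
      apply Measurable.lintegral_prod_right (f := fun y z =>
        gammaPDF b 1 z * φ (y + z) (y / (y + z)))
      exact ((gammaPDF_meas b).comp measurable_snd).mul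
        (hφ.comp ((measurable_fst.add measurable_snd).prodMk
          (measurable_fst.div (measurable_fst.add measurable_snd)))))]
  have h2 : ∀ y : ℝ, (fun y => gammaPDF a 1 y * ∫⁻ z, gammaPDF b 1 z * φ (y + z) (y / (y + z))) y
      = ∫⁻ z, gammaPDF a 1 y * gammaPDF b 1 z * φ (y + z) (y / (y + z)) := by
    intro y
    show gammaPDF a 1 y * (∫⁻ z, gammaPDF b 1 z * φ (y + z) (y / (y + z))) = _
    rw [← lintegral_const_mul' _ _ gammaPDF_ne_top]
    congr 1
    funext z
    ring
  calc ∫⁻ y, (fun y => gammaPDF a 1 y * ∫⁻ z, gammaPDF b 1 z * φ (y + z) (y / (y + z))) y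
      = ∫⁻ y, ∫⁻ z, gammaPDF a 1 y * gammaPDF b 1 z * φ (y + z) (y / (y + z)) :=
        lintegral_congr h2
    _ = ∫⁻ s, ∫⁻ w, gammaPDF (a + b) 1 s * betaPDF a b w * φ s w := star ha hb φ hφ
    _ = ∫⁻ s, gammaPDF (a + b) 1 s * ∫⁻ w, betaPDF a b w * φ s w := by
        refine lintegral_congr fun s => ?_
        rw [← lintegral_const_mul' _ _ gammaPDF_ne_top]
        congr 1
        funext w
        ring
    _ = ∫⁻ s, gammaPDF (a + b) 1 s * ∫⁻ w, φ s w ∂(betaMeasure a b) := by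
        refine lintegral_congr fun s => ?_
        congr 1
        rw [betaMeasure, lintegral_withDensity_eq_lintegral_mul _ (measurable_betaPDF a b)
          (hφ2 s)]
        rfl
    _ = ∫⁻ s, (∫⁻ w, φ s w ∂(betaMeasure a b)) ∂(gammaMeasure (a + b) 1) := by
        rw [gammaMeasure, lintegral_withDensity_eq_lintegral_mul _ (gammaPDF_meas (a + b))
          (by
            apply Measurable.lintegral_prod_right (f := fun s w => φ s w)
            exact hφ)]
        rfl

end GammaBridgeAux

end

noncomputable section

open GammaBridgeAux

/-- For `0 < t < u < r` and bounded measurable `g`, one has, `P`-a.s.,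
`E[g(ζ^r_u) | σ(ζ^r_t)] = G(ζ^r_t)` where for `x ∈ (0,1)`,
`G(x) = ∫_x^1 g(y) Γ(r-t)/(Γ(u-t)Γ(r-u)) (y-x)^(u-t-1)(1-y)^(r-u-1)/(1-x)^(r-t-1) dy`. -/
theorem gamma_bridge_transition_law
    {Ω : Type*} [MeasurableSpace Ω] (P : Measure Ω) [IsProbabilityMeasure P]
    (γ : ℝ → Ω → ℝ) (hγ : IsStdGammaProcess P γ) (t u r : ℝ)
    (ht : 0 < t) (htu : t < u) (hur : u < r)
    (ζ : ℝ → Ω → ℝ) (hζ : ∀ s ω, ζ s ω = γ (min s r) ω / γ r ω)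
    (g : ℝ → ℝ) (hg : Measurable g) (C : ℝ) (hbd : ∀ x, |g x| ≤ C)
    (G : ℝ → ℝ)
    (hG : ∀ x : ℝ, G x = ∫ y in x..(1 : ℝ),
      g y * (Real.Gamma (r - t) / (Real.Gamma (u - t) * Real.Gamma (r - u))) *
        ((y - x) ^ (u - t - 1) * (1 - y) ^ (r - u - 1) / (1 - x) ^ (r - t - 1))) :
    P[fun ω => g (ζ u ω) | MeasurableSpace.comap (ζ t) inferInstance] =ᵐ[P]
      fun ω => G (ζ t ω) := by
  classical
  have hmeas := hγ.measurable
  have hzero := hγ.zero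
  have ha : (0:ℝ) < u - t := by linarith
  have hb : (0:ℝ) < r - u := by linarith
  have htr : t < r := htu.trans hur
  have hC : 0 ≤ C := le_trans (abs_nonneg _) (hbd 0)
  haveI hβP : IsProbabilityMeasure (GammaBridgeAux.betaMeasure (u-t) (r-u)) := ⟨betaMeasure_univ ha hb⟩
  haveI : IsProbabilityMeasure (gammaMeasure t 1) := isProbabilityMeasure_gammaMeasure ht one_pos
  haveI : IsProbabilityMeasure (gammaMeasure (u-t) 1) := isProbabilityMeasure_gammaMeasure ha one_pos
  haveI : IsProbabilityMeasure (gammaMeasure (r-u) 1) := isProbabilityMeasure_gammaMeasure hb one_pos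
  haveI : IsProbabilityMeasure (gammaMeasure (u-t+(r-u)) 1) :=
    isProbabilityMeasure_gammaMeasure (add_pos ha hb) one_pos
  -- the increments
  set F0 : Ω → ℝ := fun ω => γ t ω - γ 0 ω with hF0def
  set F1 : Ω → ℝ := fun ω => γ u ω - γ t ω with hF1def
  set F2 : Ω → ℝ := fun ω => γ r ω - γ u ω with hF2def
  have hmF0 : Measurable F0 := (hmeas t).sub (hmeas 0)
  have hmF1 : Measurable F1 := (hmeas u).sub (hmeas t)
  have hmF2 : Measurable F2 := (hmeas r).sub (hmeas u)
  set τ : Fin 4 → ℝ := ![0, t, u, r] with hτdef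
  have hτmono : Monotone τ := by
    rw [Fin.monotone_iff_le_succ]
    intro i
    fin_cases i
    · exact ht.le
    · exact htu.le
    · exact hur.le
  have hτnn : ∀ i, 0 ≤ τ i := by
    intro i
    fin_cases i
    · exact le_rfl
    · exact ht.le
    · exact (ht.trans htu).le
    · exact (ht.trans htr).le
  have hind := hγ.indep_incr 3 τ hτmono hτnn
  have hfam : (fun i : Fin 3 => fun ω => γ (τ i.succ) ω - γ (τ i.castSucc) ω)
      = ![F0, F1, F2] := by
    funext i
    fin_cases i <;> rfl
  rw [hfam] at hind
  have hmfam : ∀ i, Measurable (![F0, F1, F2] i) := by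
    intro i
    fin_cases i <;> assumption
  -- laws
  have hlaw0 : P.map F0 = gammaMeasure t 1 := by
    have := hγ.incr_law 0 t le_rfl ht
    rw [sub_zero] at this
    exact this
  have hlaw1 : P.map F1 = gammaMeasure (u-t) 1 := hγ.incr_law t u ht.le htu
  have hlaw2 : P.map F2 = gammaMeasure (r-u) 1 := hγ.incr_law u r (ht.trans htu).le hur
  -- joint law
  have hm12 : Measurable fun ω => (F1 ω, F2 ω) := hmF1.prodMk hmF2
  have hIndep12 : IndepFun F1 F2 P := by
    have := hind.indepFun (show (1 : Fin 3) ≠ 2 by decide)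
    simpa using this
  have hIndep0 : IndepFun F0 (fun ω => (F1 ω, F2 ω)) P := by
    have := (hind.indepFun_prodMk hmfam 1 2 0 (by decide) (by decide)).symm
    simpa using this
  have hmap12 : P.map (fun ω => (F1 ω, F2 ω))
      = (gammaMeasure (u-t) 1).prod (gammaMeasure (r-u) 1) := by
    rw [(indepFun_iff_map_prod_eq_prod_map_map hmF1.aemeasurable hmF2.aemeasurable).mp hIndep12,
      hlaw1, hlaw2]
  have hmap012 : P.map (fun ω => (F0 ω, (F1 ω, F2 ω)))
      = (gammaMeasure t 1).prod ((gammaMeasure (u-t) 1).prod (gammaMeasure (r-u) 1)) := by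
    rw [(indepFun_iff_map_prod_eq_prod_map_map hmF0.aemeasurable hm12.aemeasurable).mp hIndep0,
      hlaw0, hmap12]
  -- V and W
  set V : Ω → ℝ := ζ t with hVdef
  have hVeq : V = fun ω => γ (min t r) ω / γ r ω := funext fun ω => hζ t ω
  have hmV : Measurable V := by rw [hVeq]; exact (hmeas _).div (hmeas r)
  set W : Ω → ℝ := fun ω => F1 ω / (F1 ω + F2 ω) with hWdef
  have hmW : Measurable W := hmF1.div (hmF1.add hmF2)
  -- a.e. positivity
  have haeF : ∀ (f : Ω → ℝ) (c : ℝ), Measurable f → P.map f = gammaMeasure c 1 →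
      ∀ᵐ ω ∂P, 0 < f ω := by
    intro f c hf hmap
    have h1 : ∀ᵐ x ∂(gammaMeasure c 1), x ∈ Set.Ioi (0:ℝ) := by
      filter_upwards [gammaMeasure_ae_pos] with x hx using hx
    rw [← hmap] at h1
    filter_upwards [(ae_map_iff hf.aemeasurable measurableSet_Ioi).mp h1] with ω hω using hω
  have hae0 := haeF F0 t hmF0 hlaw0
  have hae1 := haeF F1 (u-t) hmF1 hlaw1
  have hae2 := haeF F2 (r-u) hmF2 hlaw2
  -- a.e. identities
  have hVae : ∀ᵐ ω ∂P, V ω = F0 ω / (F0 ω + (F1 ω + F2 ω)) := by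
    filter_upwards [hzero] with ω h0
    rw [hVeq]
    simp only []
    rw [min_eq_left htr.le]
    have e1 : γ t ω = F0 ω := by rw [hF0def]; simp [h0]
    have e2 : γ r ω = F0 ω + (F1 ω + F2 ω) := by rw [hF0def, hF1def, hF2def]; ring_nf; linarith
    rw [e1, e2]
  have hVIoo : ∀ᵐ ω ∂P, V ω ∈ Set.Ioo (0:ℝ) 1 := by
    filter_upwards [hVae, hae0, hae1, hae2] with ω hV h0 h1 h2
    have hS : 0 < F0 ω + (F1 ω + F2 ω) := by linarith
    constructor
    · rw [hV]; exact div_pos h0 hS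
    · rw [hV, div_lt_one hS]; linarith
  have hUae : ∀ᵐ ω ∂P, ζ u ω = V ω + (1 - V ω) * W ω := by
    filter_upwards [hVae, hzero, hae0, hae1, hae2] with ω hV h0 hp0 hp1 hp2
    have hS : 0 < F0 ω + (F1 ω + F2 ω) := by linarith
    have h12 : 0 < F1 ω + F2 ω := by linarith
    rw [hζ u ω, min_eq_left hur.le]
    have e1 : γ u ω = F0 ω + F1 ω := by rw [hF0def, hF1def]; ring_nf; linarith
    have e2 : γ r ω = F0 ω + (F1 ω + F2 ω) := by rw [hF0def, hF1def, hF2def]; ring_nf; linarith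
    rw [e1, e2, hV, hWdef]
    field_simp
    ring
  -- core rectangle computation
  have ind_ne_top : ∀ (A : Set ℝ) (x : ℝ), A.indicator (1 : ℝ → ℝ≥0∞) x ≠ ⊤ := by
    intro A x
    by_cases h : x ∈ A <;> simp [h]
  have core : ∀ (A B : Set ℝ), MeasurableSet A → MeasurableSet B →
      P (V ⁻¹' A ∩ W ⁻¹' B) =
        (∫⁻ x, (∫⁻ s, A.indicator 1 (x / (x + s)) ∂(gammaMeasure (u-t+(r-u)) 1))
            ∂(gammaMeasure t 1)) * GammaBridgeAux.betaMeasure (u-t) (r-u) B := by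
    intro A B hA hB
    set m1 : ℝ × ℝ × ℝ → ℝ := fun p => p.1 / (p.1 + (p.2.1 + p.2.2)) with hm1
    set m2 : ℝ × ℝ × ℝ → ℝ := fun p => p.2.1 / (p.2.1 + p.2.2) with hm2
    have hmm1 : Measurable m1 :=
      measurable_fst.div (measurable_fst.add (measurable_snd.fst.add measurable_snd.snd))
    have hmm2 : Measurable m2 :=
      measurable_snd.fst.div (measurable_snd.fst.add measurable_snd.snd)
    set S : Set (ℝ × ℝ × ℝ) := m1 ⁻¹' A ∩ m2 ⁻¹' B with hSdef
    have hS : MeasurableSet S := (hmm1 hA).inter (hmm2 hB)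
    have hset : P (V ⁻¹' A ∩ W ⁻¹' B) = P ((fun ω => (F0 ω, (F1 ω, F2 ω))) ⁻¹' S) := by
      apply measure_congr
      rw [Filter.eventuallyEq_set]
      filter_upwards [hVae] with ω hV
      simp only [Set.mem_inter_iff, Set.mem_preimage, hSdef, hm1, hm2, hWdef]
      rw [hV]
    rw [hset, ← Measure.map_apply (hmF0.prodMk hm12) hS, hmap012,
      ← lintegral_indicator_one hS]
    have hSind : Measurable (S.indicator (1 : ℝ × ℝ × ℝ → ℝ≥0∞)) := measurable_one.indicator hS
    rw [lintegral_prod _ hSind.aemeasurable, ← lintegral_mul_const' (GammaBridgeAux.betaMeasure (u-t) (r-u) B)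
      _ (measure_ne_top _ _)]
    refine lintegral_congr fun x => ?_
    have hSx : Measurable fun q : ℝ × ℝ => S.indicator (1 : ℝ × ℝ × ℝ → ℝ≥0∞) (x, q) :=
      hSind.comp (measurable_const.prodMk measurable_id)
    rw [lintegral_prod _ hSx.aemeasurable]
    set φ : ℝ → ℝ → ℝ≥0∞ :=
      fun s w => A.indicator 1 (x / (x + s)) * B.indicator 1 w with hφdef
    have hmφ : Measurable (Function.uncurry φ) := by
      apply Measurable.mul
      · exact (measurable_one.indicator hA).comp
          (measurable_const.div (measurable_const.add measurable_fst))
      · exact (measurable_one.indicator hB).comp measurable_snd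
    have hindS : ∀ y z : ℝ, S.indicator (1 : ℝ × ℝ × ℝ → ℝ≥0∞) (x, (y, z))
        = φ (y + z) (y / (y + z)) := by
      intro y z
      rw [hφdef]
      by_cases h1 : x / (x + (y + z)) ∈ A <;> by_cases h2 : y / (y + z) ∈ B <;>
        simp [hSdef, hm1, hm2, Set.indicator_apply, h1, h2]
    calc ∫⁻ y, (∫⁻ z, S.indicator 1 (x, (y, z)) ∂(gammaMeasure (r-u) 1))
          ∂(gammaMeasure (u-t) 1)
        = ∫⁻ y, (∫⁻ z, φ (y + z) (y / (y + z)) ∂(gammaMeasure (r-u) 1))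
            ∂(gammaMeasure (u-t) 1) := by
          refine lintegral_congr fun y => lintegral_congr fun z => ?_
          exact hindS y z
      _ = ∫⁻ s, (∫⁻ w, φ s w ∂(GammaBridgeAux.betaMeasure (u-t) (r-u))) ∂(gammaMeasure (u-t+(r-u)) 1) :=
          star_measure ha hb φ hmφ
      _ = ∫⁻ s, A.indicator 1 (x / (x + s)) * GammaBridgeAux.betaMeasure (u-t) (r-u) B
            ∂(gammaMeasure (u-t+(r-u)) 1) := by
          refine lintegral_congr fun s => ?_
          rw [hφdef, lintegral_const_mul' _ _ (ind_ne_top A _), lintegral_indicator_one hB]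
      _ = (∫⁻ s, A.indicator 1 (x / (x + s)) ∂(gammaMeasure (u-t+(r-u)) 1)) *
            GammaBridgeAux.betaMeasure (u-t) (r-u) B := lintegral_mul_const' _ _ (measure_ne_top _ _)
  -- law of V and the product law
  have hQ : ∀ A : Set ℝ, MeasurableSet A → P.map V A =
      ∫⁻ x, (∫⁻ s, A.indicator 1 (x / (x + s)) ∂(gammaMeasure (u-t+(r-u)) 1))
        ∂(gammaMeasure t 1) := by
    intro A hA
    rw [Measure.map_apply hmV hA]
    have := core A Set.univ hA MeasurableSet.univ
    simpa [betaMeasure_univ ha hb] using this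
  have hprod : P.map (fun ω => (V ω, W ω)) = (P.map V).prod (GammaBridgeAux.betaMeasure (u-t) (r-u)) := by
    haveI : IsProbabilityMeasure (P.map V) := Measure.isProbabilityMeasure_map hmV.aemeasurable
    refine (Measure.prod_eq fun A B hA hB => ?_).symm
    rw [Measure.map_apply (hmV.prodMk hmW) (hA.prod hB)]
    have hpre : (fun ω => (V ω, W ω)) ⁻¹' (A ×ˢ B) = V ⁻¹' A ∩ W ⁻¹' B := by
      ext ω; simp [Set.mem_prod]
    rw [hpre, core A B hA hB, hQ A hA]
  -- transported a.e. membership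
  have hμVIoo : ∀ᵐ v ∂(P.map V), v ∈ Set.Ioo (0:ℝ) 1 :=
    (ae_map_iff hmV.aemeasurable measurableSet_Ioo).mpr hVIoo
  -- facts about G
  have hGfun : ∀ v ∈ Set.Ioo (0:ℝ) 1, G v = ∫ w, g (v + (1 - v) * w)
      ∂(GammaBridgeAux.betaMeasure (u-t) (r-u)) := by
    intro v hv
    rw [hG v, show r - t = u - t + (r - u) by ring]
    exact (integral_betaMeasure_eq ha hb g hv).symm
  have hGmeas : Measurable G := by
    have hGf : G = fun x => ∫ y in x..(1:ℝ), (fun x y =>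
        g y * (Real.Gamma (r - t) / (Real.Gamma (u - t) * Real.Gamma (r - u))) *
          ((y - x) ^ (u - t - 1) * (1 - y) ^ (r - u - 1) / (1 - x) ^ (r - t - 1))) x y :=
      funext hG
    rw [hGf]
    apply measurable_param_integral
    apply Measurable.mul
    · exact (hg.comp measurable_snd).mul measurable_const
    · exact (((measurable_snd.sub measurable_fst).pow_const _).mul
        ((measurable_const.sub measurable_snd).pow_const _)).div
        ((measurable_const.sub measurable_fst).pow_const _)
  have hGbd : ∀ v ∈ Set.Ioo (0:ℝ) 1, |G v| ≤ C := by
    intro v hv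
    rw [hGfun v hv, ← Real.norm_eq_abs]
    calc ‖∫ w, g (v + (1 - v) * w) ∂(GammaBridgeAux.betaMeasure (u-t) (r-u))‖
        ≤ C * ((GammaBridgeAux.betaMeasure (u-t) (r-u)) Set.univ).toReal :=
          norm_integral_le_of_norm_le_const (ae_of_all _ fun w => by
            rw [Real.norm_eq_abs]; exact hbd _)
      _ = C := by rw [betaMeasure_univ ha hb]; simp
  -- integrability
  have hmζu : Measurable (ζ u) := by
    have h : ζ u = fun ω => γ (min u r) ω / γ r ω := funext fun ω => hζ u ω
    rw [h]; exact (hmeas _).div (hmeas r)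
  have hint_f : Integrable (fun ω => g (ζ u ω)) P :=
    Integrable.mono' (integrable_const C) (hg.comp hmζu).aestronglyMeasurable
      (ae_of_all _ fun ω => by rw [Real.norm_eq_abs]; exact hbd _)
  have hint_G : Integrable (fun ω => G (V ω)) P :=
    Integrable.mono' (integrable_const C) (hGmeas.comp hmV).aestronglyMeasurable
      (by filter_upwards [hVIoo] with ω hω; rw [Real.norm_eq_abs]; exact hGbd _ hω)
  -- conclude via uniqueness of conditional expectation
  have hm : MeasurableSpace.comap V inferInstance ≤ (inferInstance : MeasurableSpace Ω) :=
    measurable_iff_comap_le.mp hmV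
  refine (ae_eq_condExp_of_forall_setIntegral_eq hm hint_f
    (fun s _ _ => hint_G.integrableOn) ?_ ?_).symm
  · -- set integral equality
    intro s hs _
    obtain ⟨B, hB, rfl⟩ := hs
    set ind : ℝ → ℝ := B.indicator (fun _ => (1:ℝ)) with hinddef
    have hmind : Measurable ind := measurable_const.indicator hB
    have hindle : ∀ v : ℝ, |ind v| ≤ 1 := by
      intro v; rw [hinddef]; by_cases h : v ∈ B <;> simp [Set.indicator_apply, h]
    set Φ : ℝ × ℝ → ℝ := fun p => ind p.1 * g (p.1 + (1 - p.1) * p.2) with hΦdef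
    have hmΦ : Measurable Φ := (hmind.comp measurable_fst).mul
      (hg.comp (measurable_fst.add ((measurable_const.sub measurable_fst).mul measurable_snd)))
    haveI : IsProbabilityMeasure (P.map V) := Measure.isProbabilityMeasure_map hmV.aemeasurable
    have hintΦ : Integrable Φ ((P.map V).prod (GammaBridgeAux.betaMeasure (u-t) (r-u))) := by
      refine Integrable.mono' (integrable_const C) hmΦ.aestronglyMeasurable
        (ae_of_all _ fun p => ?_)
      rw [Real.norm_eq_abs, hΦdef]
      calc |ind p.1 * g (p.1 + (1 - p.1) * p.2)| = |ind p.1| * |g _| := abs_mul _ _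
        _ ≤ 1 * C := mul_le_mul (hindle _) (hbd _) (abs_nonneg _) zero_le_one
        _ = C := one_mul C
    have hL : ∫ x in V ⁻¹' B, G (V x) ∂P = ∫ v, ind v * G v ∂(P.map V) := by
      rw [← integral_indicator (hmV hB),
        integral_map (f := fun v => ind v * G v) hmV.aemeasurable (hmind.mul hGmeas).aestronglyMeasurable]
      refine integral_congr_ae (ae_of_all _ fun ω => ?_)
      by_cases h : V ω ∈ B
      · simp [Set.indicator_apply, Set.mem_preimage, h, hinddef]
      · simp [Set.indicator_apply, Set.mem_preimage, h, hinddef]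
    have hR : ∫ x in V ⁻¹' B, g (ζ u x) ∂P = ∫ v, ind v * G v ∂(P.map V) := by
      rw [← integral_indicator (hmV hB)]
      have h1 : (fun ω => (V ⁻¹' B).indicator (fun x => g (ζ u x)) ω)
          =ᵐ[P] fun ω => Φ (V ω, W ω) := by
        filter_upwards [hUae] with ω hω
        by_cases h : V ω ∈ B
        · simp only [hΦdef]
          simp [Set.indicator_apply, Set.mem_preimage, h, hinddef, hω]
        · simp only [hΦdef]
          simp [Set.indicator_apply, Set.mem_preimage, h, hinddef]
      rw [integral_congr_ae h1]
      have h2 : ∫ ω, Φ (V ω, W ω) ∂P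
          = ∫ p, Φ p ∂((P.map V).prod (GammaBridgeAux.betaMeasure (u-t) (r-u))) := by
        rw [← hprod]
        exact (integral_map (hmV.prodMk hmW).aemeasurable hmΦ.aestronglyMeasurable).symm
      rw [h2, integral_prod _ hintΦ]
      refine integral_congr_ae ?_
      filter_upwards [hμVIoo] with v hv
      show ∫ w, ind v * g (v + (1 - v) * w) ∂(GammaBridgeAux.betaMeasure (u-t) (r-u)) = ind v * G v
      rw [integral_const_mul, hGfun v hv]
    exact hL.trans hR.symm
  · exact StronglyMeasurable.aestronglyMeasurable
      ((hGmeas.comp (measurable_iff_comap_le.mpr le_rfl)).stronglyMeasurable)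
end
end

section
/- For every t > 0, the events {ζ_t = 1} and {τ ≤ t} agree up to a P-null set: P({ζ_t = 1} Δ {τ ≤ t}) = 0. Consequently, {τ ≤ t} ∈ 𝓕^{ζ,c}_t for all t ≥ 0, i.e. τ is a stopping time with respect to the completed natural filtration 𝓕^{ζ,c} (hence also with respect to 𝓕^{ζ,c}_{+}). -/
open MeasureTheory ProbabilityTheory Real Set Filter

noncomputable section

/-- The gamma measure vanishes on Lebesgue-null sets. -/
lemma gammaMeasure_null_of_volume_null {a r : ℝ} {s : Set ℝ} (hs : volume s = 0) :
    gammaMeasure a r s = 0 :=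
  (withDensity_absolutelyContinuous volume (gammaPDF a r)) hs

/-- The gamma measure vanishes on the negative half-line. -/
lemma gammaMeasure_Iio_zero (a r : ℝ) : gammaMeasure a r (Set.Iio 0) = 0 := by
  rw [gammaMeasure, withDensity_apply _ measurableSet_Iio]
  exact lintegral_gammaPDF_of_nonpos le_rfl

/-- A sequence of rationals strictly between `s` and any bound, tending to `s` from above. -/
lemma exists_rat_seq_tendsto (s : ℝ) :
    ∃ q : ℕ → ℚ, (∀ n, s < (q n : ℝ) ∧ (q n : ℝ) < s + 1 / (n + 1)) ∧
      Tendsto (fun n => (q n : ℝ)) atTop (nhds s) := by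
  have h : ∀ n : ℕ, ∃ q : ℚ, s < (q : ℝ) ∧ (q : ℝ) < s + 1 / (n + 1) := by
    intro n
    refine exists_rat_btwn ?_
    have : (0 : ℝ) < 1 / (n + 1) := by positivity
    linarith
  choose q hq using h
  refine ⟨q, hq, ?_⟩
  have h1 : Tendsto (fun n : ℕ => s + 1 / (n + 1 : ℝ)) atTop (nhds (s + 0)) :=
    tendsto_const_nhds.add tendsto_one_div_add_atTop_nhds_zero_nat
  rw [add_zero] at h1
  exact tendsto_of_tendsto_of_tendsto_of_le_of_le tendsto_const_nhds h1
    (fun n => (hq n).1.le) (fun n => (hq n).2.le)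

/-- For `t > 0` the events `{ζ_t = 1}` and `{τ ≤ t}` agree up to a `P`-null set,
and consequently `{τ ≤ t}` belongs to the completed natural σ-algebra `𝓕^{ζ,c}_t` for all
`t ≥ 0`, i.e. `τ` is a stopping time for the completed natural filtration of `ζ`. -/
theorem randomLength_stopping_time
    {Ω : Type*} [MeasurableSpace Ω] (P : Measure Ω) [IsProbabilityMeasure P]
    (γ : ℝ → Ω → ℝ) (hγ : IsStdGammaProcess P γ)
    (τ : Ω → ℝ) (hτ : Measurable τ) (hτpos : ∀ ω, 0 < τ ω)
    (hindep : Indep (MeasurableSpace.comap τ inferInstance)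
      (⨆ t ∈ Set.Ici (0 : ℝ), MeasurableSpace.comap (γ t) inferInstance) P)
    (ζ : ℝ → Ω → ℝ) (hζ : ∀ t ω, ζ t ω = γ (min t (τ ω)) ω / γ (τ ω) ω)
    (Fc : ℝ → MeasurableSpace Ω)
    (hFc : ∀ t : ℝ, Fc t =
      (⨆ s ∈ Set.Icc (0 : ℝ) t, MeasurableSpace.comap (ζ s) inferInstance) ⊔
        MeasurableSpace.generateFrom {A : Set Ω | P A = 0}) :
    (∀ t : ℝ, 0 < t → P (symmDiff {ω | ζ t ω = 1} {ω | τ ω ≤ t}) = 0) ∧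
    (∀ t : ℝ, 0 ≤ t → MeasurableSet[Fc t] {ω | τ ω ≤ t}) := by
  -- increments are a.s. nonnegative and a.s. nonzero
  have hincr_nonneg : ∀ s t : ℝ, 0 ≤ s → s < t → ∀ᵐ ω ∂P, 0 ≤ γ t ω - γ s ω := by
    intro s t hs hst
    have hm : Measurable fun ω => γ t ω - γ s ω := (hγ.measurable t).sub (hγ.measurable s)
    rw [ae_iff]
    have : {ω | ¬ 0 ≤ γ t ω - γ s ω} = (fun ω => γ t ω - γ s ω) ⁻¹' Set.Iio 0 := by
      ext ω; simp [not_le]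
    rw [this, ← Measure.map_apply hm measurableSet_Iio, hγ.incr_law s t hs hst]
    exact gammaMeasure_Iio_zero _ _
  have hincr_ne : ∀ s t : ℝ, 0 ≤ s → s < t → ∀ᵐ ω ∂P, γ t ω ≠ γ s ω := by
    intro s t hs hst
    have hm : Measurable fun ω => γ t ω - γ s ω := (hγ.measurable t).sub (hγ.measurable s)
    rw [ae_iff]
    have : {ω | ¬ γ t ω ≠ γ s ω} = (fun ω => γ t ω - γ s ω) ⁻¹' {0} := by
      ext ω; simp [sub_eq_zero]
    rw [this, ← Measure.map_apply hm (measurableSet_singleton 0), hγ.incr_law s t hs hst]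
    exact gammaMeasure_null_of_volume_null (measure_singleton 0)
  -- a.s. monotonicity over rational times
  have hratmono : ∀ᵐ ω ∂P, ∀ q q' : ℚ, 0 ≤ (q : ℝ) → (q : ℝ) < (q' : ℝ) →
      γ (q : ℝ) ω ≤ γ (q' : ℝ) ω := by
    rw [ae_all_iff]
    intro q
    rw [ae_all_iff]
    intro q'
    by_cases hq : 0 ≤ (q : ℝ)
    · by_cases hqq' : (q : ℝ) < (q' : ℝ)
      · filter_upwards [hincr_nonneg q q' hq hqq'] with ω hω _ _
        linarith
      · filter_upwards with ω h1 h2; exact absurd h2 hqq'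
    · filter_upwards with ω h1 h2; exact absurd h1 hq
  -- a.s. monotonicity over all nonnegative real times
  have hmono : ∀ᵐ ω ∂P, ∀ s t : ℝ, 0 ≤ s → s ≤ t → γ s ω ≤ γ t ω := by
    filter_upwards [hratmono, hγ.cadlag] with ω hrat hc
    -- step 1 : real to rational
    have step1 : ∀ s : ℝ, 0 ≤ s → ∀ q : ℚ, s < (q : ℝ) → γ s ω ≤ γ (q : ℝ) ω := by
      intro s hs q hsq
      obtain ⟨r, hr, hrt⟩ := exists_rat_seq_tendsto s
      -- replace r n by min (r n) adjustments: instead choose rationals below q too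
      have h2 : ∀ n : ℕ, ∃ p : ℚ, s < (p : ℝ) ∧ (p : ℝ) ≤ (r n : ℝ) ∧ (p : ℝ) < (q : ℝ) := by
        intro n
        rcases lt_or_ge ((r n : ℝ)) (q : ℝ) with h | h
        · exact ⟨r n, (hr n).1, le_rfl, h⟩
        · obtain ⟨p, hp1, hp2⟩ := exists_rat_btwn hsq
          exact ⟨p, hp1, le_trans hp2.le h, hp2⟩
      choose p hp using h2
      have hpt : Tendsto (fun n => (p n : ℝ)) atTop (nhds s) := by
        refine tendsto_of_tendsto_of_tendsto_of_le_of_le tendsto_const_nhds hrt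
          (fun n => (hp n).1.le) (fun n => (hp n).2.1)
      have hpt' : Tendsto (fun n => (p n : ℝ)) atTop (nhdsWithin s (Set.Ici s)) := by
        rw [tendsto_nhdsWithin_iff]
        exact ⟨hpt, Eventually.of_forall fun n => (hp n).1.le⟩
      have hcomp : Tendsto (fun n => γ (p n : ℝ) ω) atTop (nhds (γ s ω)) :=
        (hc.1 s hs).tendsto.comp hpt'
      refine le_of_tendsto hcomp (Eventually.of_forall fun n => ?_)
      exact hrat (p n) q (le_trans hs (hp n).1.le) (hp n).2.2
    -- step 2 : real to real
    intro s t hs hst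
    rcases eq_or_lt_of_le hst with rfl | hst'
    · exact le_rfl
    · obtain ⟨r, hr, hrt⟩ := exists_rat_seq_tendsto t
      have hrt' : Tendsto (fun n => (r n : ℝ)) atTop (nhdsWithin t (Set.Ici t)) := by
        rw [tendsto_nhdsWithin_iff]
        exact ⟨hrt, Eventually.of_forall fun n => (hr n).1.le⟩
      have hcomp : Tendsto (fun n => γ (r n : ℝ) ω) atTop (nhds (γ t ω)) :=
        (hc.1 t (le_trans hs hst)).tendsto.comp hrt'
      refine ge_of_tendsto hcomp (Eventually.of_forall fun n => ?_)
      exact step1 s hs (r n) (lt_trans hst' (hr n).1)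
  -- a.s. positivity after 0
  have hne0 : ∀ᵐ ω ∂P, ∀ q : ℚ, 0 < (q : ℝ) → γ (q : ℝ) ω ≠ 0 := by
    rw [ae_all_iff]
    intro q
    by_cases hq : 0 < (q : ℝ)
    · filter_upwards [hincr_ne 0 q le_rfl hq, hγ.zero] with ω h1 h0 _
      rw [← h0]; exact h1
    · filter_upwards with ω h; exact absurd h hq
  -- main a.e. equivalence for fixed t > 0
  have key : ∀ t : ℝ, 0 < t → ∀ᵐ ω ∂P, (ζ t ω = 1 ↔ τ ω ≤ t) := by
    intro t ht
    have hne_t : ∀ᵐ ω ∂P, ∀ q : ℚ, t < (q : ℝ) → γ (q : ℝ) ω ≠ γ t ω := by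
      rw [ae_all_iff]
      intro q
      by_cases hq : t < (q : ℝ)
      · filter_upwards [hincr_ne t q ht.le hq] with ω h _; exact h
      · filter_upwards with ω h; exact absurd h hq
    filter_upwards [hmono, hγ.zero, hne0, hne_t] with ω hm h0 hn0 hnt
    have hγpos : ∀ u : ℝ, 0 < u → 0 < γ u ω := by
      intro u hu
      obtain ⟨q, hq1, hq2⟩ := exists_rat_btwn hu
      have h1 : 0 ≤ γ (q : ℝ) ω := by
        have := hm 0 q le_rfl hq1.le
        rwa [h0] at this
      have h2 : γ (q : ℝ) ω ≤ γ u ω := hm q u hq1.le hq2.le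
      have h3 : γ (q : ℝ) ω ≠ 0 := hn0 q hq1
      exact lt_of_lt_of_le (lt_of_le_of_ne h1 (Ne.symm h3)) h2
    constructor
    · intro hζ1
      by_contra hnot
      push_neg at hnot
      rw [hζ t ω, min_eq_left hnot.le] at hζ1
      have hden : γ (τ ω) ω ≠ 0 := by
        intro h; rw [h, div_zero] at hζ1; exact one_ne_zero hζ1.symm
      have heq : γ t ω = γ (τ ω) ω := (div_eq_one_iff_eq hden).mp hζ1
      obtain ⟨q, hq1, hq2⟩ := exists_rat_btwn hnot
      have hle1 : γ t ω ≤ γ (q : ℝ) ω := hm t q ht.le hq1.le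
      have hle2 : γ (q : ℝ) ω ≤ γ (τ ω) ω := hm q (τ ω) (le_trans ht.le hq1.le) hq2.le
      exact hnt q hq1 (le_antisymm (heq ▸ hle2) hle1)
    · intro hτt
      rw [hζ t ω, min_eq_right hτt]
      exact div_self (hγpos (τ ω) (hτpos ω)).ne'
  have part1 : ∀ t : ℝ, 0 < t → P (symmDiff {ω | ζ t ω = 1} {ω | τ ω ≤ t}) = 0 := by
    intro t ht
    rw [measure_eq_zero_iff_ae_notMem]
    filter_upwards [key t ht] with ω hiff
    rw [Set.mem_symmDiff]
    rintro (⟨h1, h2⟩ | ⟨h1, h2⟩)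
    · exact h2 (hiff.mp h1)
    · exact h2 (hiff.mpr h1)
  refine ⟨part1, ?_⟩
  intro t ht
  rcases eq_or_lt_of_le ht with rfl | ht'
  · have : {ω | τ ω ≤ (0 : ℝ)} = ∅ := by
      ext ω; simp only [Set.mem_setOf_eq, Set.mem_empty_iff_false, iff_false, not_le]
      exact hτpos ω
    rw [this]
    exact @MeasurableSet.empty _ (Fc 0)
  · rw [hFc t]
    have hA : MeasurableSet[MeasurableSpace.comap (ζ t) inferInstance] {ω | ζ t ω = 1} := by
      refine MeasurableSpace.measurableSet_comap.mpr ⟨{1}, measurableSet_singleton 1, ?_⟩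
      ext ω; simp
    have hle : MeasurableSpace.comap (ζ t) inferInstance ≤
        ⨆ s ∈ Set.Icc (0 : ℝ) t, MeasurableSpace.comap (ζ s) inferInstance := by
      exact le_biSup (fun s => MeasurableSpace.comap (ζ s) inferInstance)
        (Set.mem_Icc.mpr ⟨ht'.le, le_rfl⟩)
    have hA' : MeasurableSet[(⨆ s ∈ Set.Icc (0 : ℝ) t,
        MeasurableSpace.comap (ζ s) inferInstance) ⊔
        MeasurableSpace.generateFrom {A : Set Ω | P A = 0}] {ω | ζ t ω = 1} :=
      (le_trans hle le_sup_left) _ hA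
    have hD : MeasurableSet[(⨆ s ∈ Set.Icc (0 : ℝ) t,
        MeasurableSpace.comap (ζ s) inferInstance) ⊔
        MeasurableSpace.generateFrom {A : Set Ω | P A = 0}]
        (symmDiff {ω | ζ t ω = 1} {ω | τ ω ≤ t}) :=
      (le_sup_right (a := ⨆ s ∈ Set.Icc (0 : ℝ) t,
        MeasurableSpace.comap (ζ s) inferInstance)
        (b := MeasurableSpace.generateFrom {A : Set Ω | P A = 0})) _
        (MeasurableSpace.measurableSet_generateFrom (part1 t ht'))
    have : {ω | τ ω ≤ t} =
        symmDiff {ω | ζ t ω = 1} (symmDiff {ω | ζ t ω = 1} {ω | τ ω ≤ t}) :=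
      (symmDiff_symmDiff_cancel_left _ _).symm
    rw [this]
    exact hA'.symmDiff hD
end
end
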